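/- arXiv:1403.4324 — 3 statements merged into one kernel-verified Lean document; each statement's English description precedes it below -/
import Mathlib

section
/- Let Λ = lim(Λ_n, p_n) be the (k+1)-graph associated to a covering sequence of k-graphs and let A be an abelian group. Then the restriction map c ↦ c|_{Λ_1} from Z²(Λ, A) to Z²(Λ_1, A) maps B²(Λ, A) into B²(Λ_1, A) and induces a group isomorphism H²(Λ, A) ≅ H²(Λ_1, A). -/
open scoped BigOperators NNReal ENNReal

/-- A `k`-graph: a countable small category presented on its set of morphisms,
with a range map, a source map, a (total, junk-valued on non-composable pairs)
composition, and a degree functor into `ℕ^k` satisfying the factorisation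
property. -/
structure KGraph (k : ℕ) where
  M : Type
  countableM : Countable M
  nonemptyM : Nonempty M
  src : M → M
  rng : M → M
  comp : M → M → M
  deg : M → Fin k → ℕ
  src_src : ∀ x, src (src x) = src x
  rng_src : ∀ x, rng (src x) = src x
  src_rng : ∀ x, src (rng x) = rng x
  rng_rng : ∀ x, rng (rng x) = rng x
  comp_id : ∀ x, comp x (src x) = x
  id_comp : ∀ x, comp (rng x) x = x
  src_comp : ∀ x y, src x = rng y → src (comp x y) = src y
  rng_comp : ∀ x y, src x = rng y → rng (comp x y) = rng x
  comp_assoc : ∀ x y z, src x = rng y → src y = rng z →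
    comp (comp x y) z = comp x (comp y z)
  deg_src : ∀ x, deg (src x) = 0
  deg_rng : ∀ x, deg (rng x) = 0
  deg_comp : ∀ x y, src x = rng y → deg (comp x y) = deg x + deg y
  factor : ∀ (x : M) (m n : Fin k → ℕ), deg x = m + n →
    ∃! p : M × M, src p.1 = rng p.2 ∧ comp p.1 p.2 = x ∧ deg p.1 = m ∧ deg p.2 = n

namespace KGraph

variable {k : ℕ} (Λ : KGraph k)

/-- The vertices (identity morphisms) of a `k`-graph. -/
def IsVertex (v : Λ.M) : Prop := Λ.rng v = v

/-- `Composable x y` means the composition `x ∘ y` (i.e. the path `xy`) is defined. -/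
def Composable (x y : Λ.M) : Prop := Λ.src x = Λ.rng y

/-- The type of vertices of `Λ`. -/
def Vtx := {v : Λ.M // Λ.IsVertex v}

theorem isVertex_src (x : Λ.M) : Λ.IsVertex (Λ.src x) := Λ.rng_src x

theorem isVertex_rng (x : Λ.M) : Λ.IsVertex (Λ.rng x) := Λ.rng_rng x

/-- The source of a morphism, as a vertex. -/
def srcV (x : Λ.M) : Λ.Vtx := ⟨Λ.src x, Λ.isVertex_src x⟩

/-- The set `vΛ^{≤ n}`. -/
def leSet (v : Λ.M) (n : Fin k → ℕ) : Set Λ.M :=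
  {x | Λ.rng x = v ∧ Λ.deg x ≤ n ∧
    ∀ i : Fin k, Λ.deg x + Pi.single i 1 ≤ n →
      ¬∃ y, Λ.rng y = Λ.src x ∧ Λ.deg y = Pi.single i 1}

/-- A `k`-graph is row-finite if `vΛ^n` is finite for every vertex `v` and `n ∈ ℕ^k`. -/
def RowFinite : Prop :=
  ∀ (v : Λ.M) (n : Fin k → ℕ), Λ.IsVertex v → {x | Λ.rng x = v ∧ Λ.deg x = n}.Finite

/-- A `k`-graph is locally convex if whenever `i < j`, `e ∈ Λ^{e_i}`, `f ∈ Λ^{e_j}` and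
`r e = r f`, both `e` and `f` extend to paths of degree `e_i + e_j`. -/
def LocallyConvex : Prop :=
  ∀ (i j : Fin k), i < j → ∀ e f : Λ.M,
    Λ.deg e = Pi.single i 1 → Λ.deg f = Pi.single j 1 → Λ.rng e = Λ.rng f →
    (∃ e', Λ.Composable e e' ∧ Λ.deg e' = Pi.single j 1) ∧
    (∃ f', Λ.Composable f f' ∧ Λ.deg f' = Pi.single i 1)

/-- `Λ^{min}(x,y)`: the pairs `(α, β)` with `xα = yβ` of degree `d x ⊔ d y`. -/
def MinExt (x y : Λ.M) : Set (Λ.M × Λ.M) :=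
  {p | Λ.Composable x p.1 ∧ Λ.Composable y p.2 ∧
    Λ.comp x p.1 = Λ.comp y p.2 ∧ Λ.deg (Λ.comp x p.1) = Λ.deg x ⊔ Λ.deg y}

/-- A subset `E ⊆ vΛ` is exhaustive if every `x ∈ vΛ` has a minimal common extension
with some element of `E`. -/
def Exhaustive (v : Λ.M) (E : Set Λ.M) : Prop :=
  ∀ x, Λ.rng x = v → ∃ μ ∈ E, (Λ.MinExt x μ).Nonempty

/-- A graph trace on `Λ`. -/
def IsGraphTrace (g : Λ.Vtx → ℝ≥0) : Prop :=
  ∀ (v : Λ.Vtx) (n : Fin k → ℕ), g v = ∑ᶠ x ∈ Λ.leSet v.1 n, g (Λ.srcV x)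

/-- A `𝕋`-valued `2`-cocycle on `Λ`, presented as a `ℂ`-valued function that is
unimodular on composable pairs. -/
def IsTCocycle (c : Λ.M → Λ.M → ℂ) : Prop :=
  (∀ x y, Λ.Composable x y → ‖c x y‖ = 1) ∧
  (∀ x y, Λ.IsVertex x ∨ Λ.IsVertex y → c x y = 1) ∧
  (∀ x y z, Λ.Composable x y → Λ.Composable y z →
    c x y * c (Λ.comp x y) z = c y z * c x (Λ.comp y z))

/-- A Cuntz–Krieger `(Λ, c)`-family in a `C*`-algebra `B`: relations (CK1)–(CK4). -/
def IsCKFamily {B : Type*} [NonUnitalCStarAlgebra B] [NormedSpace ℂ B]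
    (c : Λ.M → Λ.M → ℂ) (s : Λ.M → B) : Prop :=
  (∀ v, Λ.IsVertex v → star (s v) = s v ∧ s v * s v = s v) ∧
  (∀ v w, Λ.IsVertex v → Λ.IsVertex w → v ≠ w → s v * s w = 0) ∧
  (∀ x y, Λ.Composable x y → s x * s y = c x y • s (Λ.comp x y)) ∧
  (∀ x, star (s x) * s x = s (Λ.src x)) ∧
  (∀ (v : Λ.M) (n : Fin k → ℕ), Λ.IsVertex v →
    s v = ∑ᶠ x ∈ Λ.leSet v n, s x * star (s x))

end KGraph
attribute [local instance] Classical.propDecidable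

namespace KGraph

variable {k : ℕ}

/-- An `A`-valued (categorical) `2`-cocycle on a `k`-graph, encoded as a total
function that vanishes on non-composable pairs and on pairs involving an
identity morphism, and satisfies the cocycle identity on composable triples. -/
def IsCocycle2 (Λ : KGraph k) {A : Type*} [AddCommGroup A] (c : Λ.M → Λ.M → A) : Prop :=
  (∀ x y, ¬Λ.Composable x y → c x y = 0) ∧
  (∀ x y, Λ.IsVertex x ∨ Λ.IsVertex y → c x y = 0) ∧
  (∀ x y z, Λ.Composable x y → Λ.Composable y z →
    c x y + c (Λ.comp x y) z = c y z + c x (Λ.comp y z))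

/-- The group `Z²(Λ, A)` of `A`-valued `2`-cocycles on `Λ`. -/
def Z2 (Λ : KGraph k) (A : Type*) [AddCommGroup A] : AddSubgroup (Λ.M → Λ.M → A) where
  carrier := {c | Λ.IsCocycle2 c}
  zero_mem' := by
    refine ⟨fun _ _ _ => rfl, fun _ _ _ => rfl, fun _ _ _ _ _ => rfl⟩
  add_mem' := by
    rintro c d ⟨hc1, hc2, hc3⟩ ⟨hd1, hd2, hd3⟩
    refine ⟨fun x y h => ?_, fun x y h => ?_, fun x y z h1 h2 => ?_⟩
    · simp [hc1 x y h, hd1 x y h]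
    · simp [hc2 x y h, hd2 x y h]
    · simp only [Pi.add_apply]
      rw [add_add_add_comm, hc3 x y z h1 h2, hd3 x y z h1 h2, add_add_add_comm]
  neg_mem' := by
    rintro c ⟨hc1, hc2, hc3⟩
    refine ⟨fun x y h => ?_, fun x y h => ?_, fun x y z h1 h2 => ?_⟩
    · simp [hc1 x y h]
    · simp [hc2 x y h]
    · simp only [Pi.neg_apply]
      rw [← neg_add, ← neg_add, hc3 x y z h1 h2]

/-- A `1`-cochain: a function on morphisms vanishing on the identity morphisms. -/
def IsCochain1 (Λ : KGraph k) {A : Type*} [AddCommGroup A] (b : Λ.M → A) : Prop :=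
  ∀ v, Λ.IsVertex v → b v = 0

/-- The coboundary `δ¹ b` of a `1`-cochain `b`. -/
noncomputable def delta1 (Λ : KGraph k) {A : Type*} [AddCommGroup A] (b : Λ.M → A) :
    Λ.M → Λ.M → A :=
  fun x y => if Λ.Composable x y then b x + b y - b (Λ.comp x y) else 0

/-- The group `B²(Λ, A)` of `A`-valued `2`-coboundaries on `Λ`. -/
noncomputable def B2 (Λ : KGraph k) (A : Type*) [AddCommGroup A] :
    AddSubgroup (Λ.M → Λ.M → A) where
  carrier := {c | ∃ b, Λ.IsCochain1 b ∧ c = Λ.delta1 b}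
  zero_mem' := ⟨0, fun _ _ => rfl, by
    funext x y
    simp [delta1]⟩
  add_mem' := by
    rintro c d ⟨b, hb, rfl⟩ ⟨b', hb', rfl⟩
    refine ⟨b + b', fun v hv => by simp [hb v hv, hb' v hv], ?_⟩
    funext x y
    simp only [Pi.add_apply, delta1]
    split <;> [abel; simp]
  neg_mem' := by
    rintro c ⟨b, hb, rfl⟩
    refine ⟨-b, fun v hv => by simp [hb v hv], ?_⟩
    funext x y
    simp only [Pi.neg_apply, delta1]
    split <;> [abel; simp]

/-- The second (categorical) cohomology group `H²(Λ, A) = Z²(Λ,A)/B²(Λ,A)`. -/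
noncomputable def H2 (Λ : KGraph k) (A : Type*) [AddCommGroup A] :=
  Z2 Λ A ⧸ (B2 Λ A).addSubgroupOf (Z2 Λ A)

noncomputable instance (Λ : KGraph k) (A : Type*) [AddCommGroup A] :
    AddCommGroup (H2 Λ A) := by
  unfold H2; infer_instance

/-- A covering of `k`-graphs: a surjective degree-preserving functor that restricts to
bijections `Γv → Λ p(v)` and `vΓ → p(v)Λ` on every vertex `v`. -/
def IsKGraphCovering (Γ Λ : KGraph k) (p : Γ.M → Λ.M) : Prop :=
  Function.Surjective p ∧
  (∀ x, Λ.src (p x) = p (Γ.src x)) ∧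
  (∀ x, Λ.rng (p x) = p (Γ.rng x)) ∧
  (∀ x, Λ.deg (p x) = Γ.deg x) ∧
  (∀ x y, Γ.Composable x y → p (Γ.comp x y) = Λ.comp (p x) (p y)) ∧
  (∀ v, Γ.IsVertex v → Set.BijOn p {x | Γ.src x = v} {y | Λ.src y = p v}) ∧
  (∀ v, Γ.IsVertex v → Set.BijOn p {x | Γ.rng x = v} {y | Λ.rng y = p v})

end KGraph

open KGraph

/-- The `(k+1)`-graph `Λ = lim (Λ_n, p_n)` associated to a covering sequence of
`k`-graphs, together with all its defining data: `L n` is the `k`-graph `Λ_{n+1}`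
(so `L 0 = Λ₁`), `p n : Λ_{n+2} → Λ_{n+1}` are the coverings, `Lam` is the limit
`(k+1)`-graph, `ι n : Λ_{n+1} → Λ` are the injective functors, and `edge` is the
bijection of `⨆_{n ≥ 2} Λ_n^0` onto `Λ^{e_{k+1}}`, subject to the characterising
properties (1)–(5). -/
structure CovSeqLimit (k : ℕ) where
  L : ℕ → KGraph k
  p : ∀ n, (L (n + 1)).M → (L n).M
  p_cov : ∀ n, IsKGraphCovering (L (n + 1)) (L n) (p n)
  Lam : KGraph (k + 1)
  ι : ∀ n, (L n).M → Lam.M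
  ι_inj : ∀ n, Function.Injective (ι n)
  ι_src : ∀ n x, Lam.src (ι n x) = ι n ((L n).src x)
  ι_rng : ∀ n x, Lam.rng (ι n x) = ι n ((L n).rng x)
  ι_comp : ∀ n x y, (L n).Composable x y →
    Lam.comp (ι n x) (ι n y) = ι n ((L n).comp x y)
  ι_deg : ∀ n x, Lam.deg (ι n x) = Fin.snoc ((L n).deg x) 0
  ι_disjoint : ∀ m n x y, ι m x = ι n y → m = n
  ι_union : ∀ z : Lam.M, Lam.deg z (Fin.last k) = 0 → ∃ n x, ι n x = z
  edge : (Σ n : ℕ, (L (n + 1)).M) → Lam.M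
  edge_deg : ∀ q : Σ n, (L (n + 1)).M, (L (q.1 + 1)).IsVertex q.2 →
    Lam.deg (edge q) = Fin.snoc (fun _ : Fin k => 0) 1
  edge_injOn : Set.InjOn edge {q | (L (q.1 + 1)).IsVertex q.2}
  edge_surj : ∀ z : Lam.M, Lam.deg z = Fin.snoc (fun _ : Fin k => 0) 1 →
    ∃ q, (L (q.1 + 1)).IsVertex q.2 ∧ edge q = z
  edge_src : ∀ (n) (v : (L (n + 1)).M), (L (n + 1)).IsVertex v →
    Lam.src (edge ⟨n, v⟩) = ι (n + 1) v
  edge_rng : ∀ (n) (v : (L (n + 1)).M), (L (n + 1)).IsVertex v →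
    Lam.rng (edge ⟨n, v⟩) = ι n (p n v)
  edge_comm : ∀ (n) (x : (L (n + 1)).M),
    Lam.comp (edge ⟨n, (L (n + 1)).rng x⟩) (ι (n + 1) x) =
      Lam.comp (ι n (p n x)) (edge ⟨n, (L (n + 1)).src x⟩)

namespace CovSeqLimit

variable {k : ℕ} (C : CovSeqLimit k)

/-- The iterated covering maps `p_{1,n} : Λ_n → Λ_1`. -/
def pIter : ∀ n, (C.L n).M → (C.L 0).M
  | 0 => id
  | n + 1 => pIter n ∘ C.p n

/-- A degree `d ∈ ℕ^{k+1}` lies in `ℕ e_{k+1}` iff its first `k` coordinates vanish. -/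
def OnlyLast {k : ℕ} (d : Fin (k + 1) → ℕ) : Prop :=
  ∀ i : Fin k, d i.castSucc = 0

/-- The hypothesis that `ξ` assigns to each vertex `v` of `Λ` the path
`ξ_v ∈ Λ_1^0 Λ^{ℕ e_{k+1}} v`. -/
def IsXi (ξ : C.Lam.M → C.Lam.M) : Prop :=
  ∀ v, C.Lam.IsVertex v → C.Lam.src (ξ v) = v ∧ OnlyLast (C.Lam.deg (ξ v)) ∧
    ∃ w, (C.L 0).IsVertex w ∧ C.Lam.rng (ξ v) = C.ι 0 w

/-- The hypothesis that `π : Λ → Λ₁` is the projection determined by the unique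
factorisation `ξ_{r λ} λ = π(λ) β` with `π(λ) ∈ Λ₁` and `β ∈ Λ^{ℕ e_{k+1}}`. -/
def IsProjOnto (ξ : C.Lam.M → C.Lam.M) (π : C.Lam.M → (C.L 0).M) : Prop :=
  ∀ x, ∃ β, OnlyLast (C.Lam.deg β) ∧ C.Lam.Composable (C.ι 0 (π x)) β ∧
    C.Lam.comp (ξ (C.Lam.rng x)) x = C.Lam.comp (C.ι 0 (π x)) β

/-- The map `π_* : Z²(Λ₁, A) → Z²(Λ, A)`, `π_* c (λ, μ) = c(π λ, π μ)`. -/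
noncomputable def pfwd {A : Type*} [AddCommGroup A] (π : C.Lam.M → (C.L 0).M)
    (c : (C.L 0).M → (C.L 0).M → A) : C.Lam.M → C.Lam.M → A :=
  fun x y => if C.Lam.Composable x y then c (π x) (π y) else 0

/-- The restriction map `Z²(Λ, A) → Z²(Λ₁, A)`, `c ↦ c|_{Λ₁}`. -/
def res {A : Type*} [AddCommGroup A] (c : C.Lam.M → C.Lam.M → A) :
    (C.L 0).M → (C.L 0).M → A :=
  fun x y => c (C.ι 0 x) (C.ι 0 y)

end CovSeqLimit

section Aux

namespace KGraph

variable {k : ℕ} {Λ : KGraph k}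

lemma composable_iff {x y : Λ.M} : Λ.Composable x y ↔ Λ.src x = Λ.rng y := Iff.rfl

lemma vertex_src_eq {v : Λ.M} (hv : Λ.IsVertex v) : Λ.src v = v := by
  have h := Λ.src_rng v
  rw [hv] at h
  exact h

lemma vertex_deg {v : Λ.M} (hv : Λ.IsVertex v) : Λ.deg v = 0 := by
  have h := Λ.deg_rng v
  rw [hv] at h
  exact h

lemma deg_zero_vertex {z : Λ.M} (hz : Λ.deg z = 0) : Λ.IsVertex z := by
  obtain ⟨P, hP, hu⟩ := Λ.factor z 0 0 (by rw [hz, add_zero])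
  have e1 := hu (z, Λ.src z) ⟨(Λ.rng_src z).symm, Λ.comp_id z, hz, Λ.deg_src z⟩
  have e2 := hu (Λ.rng z, z) ⟨Λ.src_rng z, Λ.id_comp z, Λ.deg_rng z, hz⟩
  have h1 : z = Λ.rng z := congrArg Prod.fst (e1.trans e2.symm)
  exact h1.symm

lemma composable_comp_left {x y z : Λ.M} (hxy : Λ.Composable x y)
    (hyz : Λ.Composable y z) : Λ.Composable (Λ.comp x y) z := by
  show Λ.src _ = _
  rw [Λ.src_comp x y hxy]
  exact hyz

lemma composable_comp_right {x y z : Λ.M} (hxy : Λ.Composable x y)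
    (hyz : Λ.Composable y z) : Λ.Composable x (Λ.comp y z) := by
  show Λ.src _ = _
  rw [Λ.rng_comp y z hyz]
  exact hxy

lemma snoc_add {k : ℕ} (a c : Fin k → ℕ) (b d : ℕ) :
    (Fin.snoc a b + Fin.snoc c d : Fin (k + 1) → ℕ) = Fin.snoc (a + c) (b + d) := by
  funext i
  refine Fin.lastCases ?_ ?_ i <;> simp

lemma deg_split {Λ' : KGraph (k + 1)} (z : Λ'.M) :
    Λ'.deg z = Fin.snoc (fun i => Λ'.deg z i.castSucc) 0
      + Fin.snoc (0 : Fin k → ℕ) (Λ'.deg z (Fin.last k)) := by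
  funext i
  refine Fin.lastCases ?_ ?_ i <;> simp

end KGraph

namespace CovSeqLimit

open KGraph

variable {k : ℕ} (C : CovSeqLimit k)

lemma p_src (n : ℕ) (x : (C.L (n + 1)).M) :
    (C.L n).src (C.p n x) = C.p n ((C.L (n + 1)).src x) := (C.p_cov n).2.1 x

lemma p_rng (n : ℕ) (x : (C.L (n + 1)).M) :
    (C.L n).rng (C.p n x) = C.p n ((C.L (n + 1)).rng x) := (C.p_cov n).2.2.1 x

lemma p_vertex (n : ℕ) {w : (C.L (n + 1)).M} (hw : (C.L (n + 1)).IsVertex w) :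
    (C.L n).IsVertex (C.p n w) := by
  show (C.L n).rng _ = _
  rw [C.p_rng, hw]

lemma pIter_vertex : ∀ (n : ℕ) {w : (C.L n).M}, (C.L n).IsVertex w →
    (C.L 0).IsVertex (C.pIter n w)
  | 0, w, hw => hw
  | n + 1, w, hw => pIter_vertex n (C.p_vertex n hw)

lemma iota_vertex (n : ℕ) {w : (C.L n).M} (hw : (C.L n).IsVertex w) :
    C.Lam.IsVertex (C.ι n w) := by
  show C.Lam.rng _ = _
  rw [C.ι_rng, hw]

lemma vertex_rep {v : C.Lam.M} (hv : C.Lam.IsVertex v) :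
    ∃ n w, (C.L n).IsVertex w ∧ C.ι n w = v := by
  obtain ⟨n, w, hw⟩ := C.ι_union v (by rw [vertex_deg hv]; rfl)
  refine ⟨n, w, ?_, hw⟩
  have h := C.ι_rng n w
  rw [hw, hv, ← hw] at h
  exact (C.ι_inj n h).symm

/-- The canonical path `ξ` from level `n` down to level `0`. -/
def xi : (n : ℕ) → (C.L n).M → C.Lam.M
  | 0, w => C.ι 0 w
  | n + 1, w => C.Lam.comp (xi n (C.p n w)) (C.edge ⟨n, w⟩)

lemma xi_composable (n : ℕ) {w : (C.L (n + 1)).M} (hw : (C.L (n + 1)).IsVertex w)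
    (hsrc : C.Lam.src (C.xi n (C.p n w)) = C.ι n (C.p n w)) :
    C.Lam.Composable (C.xi n (C.p n w)) (C.edge ⟨n, w⟩) := by
  show C.Lam.src _ = _
  rw [hsrc, C.edge_rng n w hw]

lemma xi_src : ∀ (n : ℕ) {w : (C.L n).M}, (C.L n).IsVertex w →
    C.Lam.src (C.xi n w) = C.ι n w
  | 0, w, hw => by
    show C.Lam.src (C.ι 0 w) = _
    rw [C.ι_src, vertex_src_eq hw]
  | n + 1, w, hw => by
    have hc := C.xi_composable n hw (xi_src n (C.p_vertex n hw))
    show C.Lam.src (C.Lam.comp _ _) = _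
    rw [C.Lam.src_comp _ _ hc, C.edge_src n w hw]

lemma xi_rng : ∀ (n : ℕ) {w : (C.L n).M}, (C.L n).IsVertex w →
    C.Lam.rng (C.xi n w) = C.ι 0 (C.pIter n w)
  | 0, w, hw => by
    show C.Lam.rng (C.ι 0 w) = _
    rw [C.ι_rng, hw]
    rfl
  | n + 1, w, hw => by
    have hc := C.xi_composable n hw (C.xi_src n (C.p_vertex n hw))
    show C.Lam.rng (C.Lam.comp _ _) = _
    rw [C.Lam.rng_comp _ _ hc, xi_rng n (C.p_vertex n hw)]
    rfl

lemma xi_deg : ∀ (n : ℕ) {w : (C.L n).M}, (C.L n).IsVertex w →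
    C.Lam.deg (C.xi n w) = Fin.snoc (0 : Fin k → ℕ) n
  | 0, w, hw => by
    show C.Lam.deg (C.ι 0 w) = _
    rw [C.ι_deg, vertex_deg hw]
  | n + 1, w, hw => by
    have hc := C.xi_composable n hw (C.xi_src n (C.p_vertex n hw))
    show C.Lam.deg (C.Lam.comp _ _) = _
    rw [C.Lam.deg_comp _ _ hc, xi_deg n (C.p_vertex n hw), C.edge_deg ⟨n, w⟩ hw]
    have : (fun _ : Fin k => 0) = (0 : Fin k → ℕ) := rfl
    rw [this, snoc_add, add_zero]

/-- `Xi v` is the canonical path `ξ_v` when `v = ι n w`. -/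
noncomputable def Xi (v : C.Lam.M) : C.Lam.M :=
  if h : ∃ q : Σ n, (C.L n).M, C.ι q.1 q.2 = v then C.xi h.choose.1 h.choose.2 else v

lemma Xi_eq (n : ℕ) (w : (C.L n).M) : C.Xi (C.ι n w) = C.xi n w := by
  have h : ∃ q : Σ n, (C.L n).M, C.ι q.1 q.2 = C.ι n w := ⟨⟨n, w⟩, rfl⟩
  rw [Xi, dif_pos h]
  have key : ∀ q : Σ n, (C.L n).M, C.ι q.1 q.2 = C.ι n w → C.xi q.1 q.2 = C.xi n w := by
    rintro ⟨m, u⟩ hs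
    obtain rfl : m = n := C.ι_disjoint m n u w hs
    obtain rfl : u = w := C.ι_inj m hs
    rfl
  exact key h.choose h.choose_spec

lemma edge_of_deg {e : C.Lam.M} (h : C.Lam.deg e = Fin.snoc (0 : Fin k → ℕ) 1) :
    ∃ q, (C.L (q.1 + 1)).IsVertex q.2 ∧ C.edge q = e :=
  C.edge_surj e h

/-- Uniqueness of "only-last-degree" paths with a given source. -/
lemma onlyLast_unique : ∀ (j : ℕ) (β β' : C.Lam.M),
    (∀ i : Fin k, C.Lam.deg β i.castSucc = 0) →
    (∀ i : Fin k, C.Lam.deg β' i.castSucc = 0) →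
    C.Lam.deg β (Fin.last k) = j → C.Lam.deg β' (Fin.last k) = j →
    C.Lam.src β = C.Lam.src β' → β = β' := by
  intro j
  induction j with
  | zero =>
    intro β β' hβ hβ' hj hj' hs
    have hv : C.Lam.IsVertex β := deg_zero_vertex (by
      funext i
      refine Fin.lastCases ?_ ?_ i
      · exact hj
      · exact hβ)
    have hv' : C.Lam.IsVertex β' := deg_zero_vertex (by
      funext i
      refine Fin.lastCases ?_ ?_ i
      · exact hj'
      · exact hβ')
    rw [← vertex_src_eq hv, ← vertex_src_eq hv', hs]
  | succ j ih =>
    intro β β' hβ hβ' hj hj' hs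
    have hd : C.Lam.deg β = Fin.snoc (0 : Fin k → ℕ) j + Fin.snoc (0 : Fin k → ℕ) 1 := by
      rw [snoc_add]
      funext i
      refine Fin.lastCases ?_ ?_ i <;> simp [hj, hβ]
    have hd' : C.Lam.deg β' = Fin.snoc (0 : Fin k → ℕ) j + Fin.snoc (0 : Fin k → ℕ) 1 := by
      rw [snoc_add]
      funext i
      refine Fin.lastCases ?_ ?_ i <;> simp [hj', hβ']
    obtain ⟨⟨γ, e⟩, ⟨hce, hcomp, hdγ, hde⟩, -⟩ := C.Lam.factor β _ _ hd
    obtain ⟨⟨γ', e'⟩, ⟨hce', hcomp', hdγ', hde'⟩, -⟩ := C.Lam.factor β' _ _ hd'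
    dsimp only at hce hcomp hdγ hde hce' hcomp' hdγ' hde'
    obtain ⟨q, hqv, hqe⟩ := C.edge_of_deg hde
    obtain ⟨q', hqv', hqe'⟩ := C.edge_of_deg hde'
    have hsrc : C.Lam.src e = C.Lam.src e' := by
      have h1 : C.Lam.src β = C.Lam.src e := by
        rw [← hcomp, C.Lam.src_comp _ _ hce]
      have h2 : C.Lam.src β' = C.Lam.src e' := by
        rw [← hcomp', C.Lam.src_comp _ _ hce']
      rw [← h1, ← h2, hs]
    have hee : e = e' := by
      rw [← hqe, ← hqe'] at hsrc ⊢
      rw [C.edge_src q.1 q.2 hqv, C.edge_src q'.1 q'.2 hqv'] at hsrc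
      have h1 : q.1 + 1 = q'.1 + 1 := C.ι_disjoint _ _ _ _ hsrc
      obtain ⟨a, u⟩ := q
      obtain ⟨a', u'⟩ := q'
      simp only at h1 hsrc ⊢
      obtain rfl : a = a' := by omega
      obtain rfl : u = u' := C.ι_inj _ hsrc
      rfl
    have hγγ : γ = γ' := by
      refine ih γ γ' ?_ ?_ ?_ ?_ ?_
      · intro i; rw [hdγ]; simp
      · intro i; rw [hdγ']; simp
      · rw [hdγ]; simp
      · rw [hdγ']; simp
      · rw [hce, hce', hee]
    rw [← hcomp, ← hcomp', hee, hγγ]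

/-- The source of an only-last path lies `j` levels above its range. -/
lemma onlyLast_src : ∀ (j : ℕ) (β : C.Lam.M),
    (∀ i : Fin k, C.Lam.deg β i.castSucc = 0) →
    C.Lam.deg β (Fin.last k) = j →
    ∀ (n : ℕ) (u : (C.L n).M), (C.L n).IsVertex u → C.Lam.rng β = C.ι n u →
    ∃ q : Σ m, (C.L m).M, q.1 = n + j ∧ (C.L q.1).IsVertex q.2 ∧
      C.Lam.src β = C.ι q.1 q.2 := by
  intro j
  induction j with
  | zero =>
    intro β hβ hj n u hu hr
    have hv : C.Lam.IsVertex β := deg_zero_vertex (by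
      funext i
      refine Fin.lastCases ?_ ?_ i
      · exact hj
      · exact hβ)
    refine ⟨⟨n, u⟩, by simp, hu, ?_⟩
    rw [vertex_src_eq hv, ← hv, hr]
  | succ j ih =>
    intro β hβ hj n u hu hr
    have hd : C.Lam.deg β = Fin.snoc (0 : Fin k → ℕ) 1 + Fin.snoc (0 : Fin k → ℕ) j := by
      rw [snoc_add]
      funext i
      refine Fin.lastCases ?_ ?_ i <;> simp [hj, hβ, Nat.add_comm]
    obtain ⟨⟨e, γ⟩, ⟨hce, hcomp, hde, hdγ⟩, -⟩ := C.Lam.factor β _ _ hd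
    dsimp only at hce hcomp hde hdγ
    obtain ⟨q, hqv, hqe⟩ := C.edge_of_deg hde
    obtain ⟨a, v⟩ := q
    have hre : C.Lam.rng e = C.ι n u := by
      rw [← hcomp, C.Lam.rng_comp _ _ hce] at hr
      exact hr
    rw [← hqe, C.edge_rng a v hqv] at hre
    obtain rfl : a = n := C.ι_disjoint _ _ _ _ hre
    have hrγ : C.Lam.rng γ = C.ι (a + 1) v := by
      rw [← hce, ← hqe, C.edge_src a v hqv]
    obtain ⟨Q, hQ1, hQ2, hQ3⟩ := ih γ (by intro i; rw [hdγ]; simp) (by rw [hdγ]; simp)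
      (a + 1) v hqv hrγ
    refine ⟨Q, by omega, hQ2, ?_⟩
    rw [← hcomp, C.Lam.src_comp _ _ hce, hQ3]

lemma Xi_src {v : C.Lam.M} (hv : C.Lam.IsVertex v) : C.Lam.src (C.Xi v) = v := by
  obtain ⟨n, w, hw, rfl⟩ := C.vertex_rep hv
  rw [C.Xi_eq, C.xi_src n hw]

lemma Xi_deg {v : C.Lam.M} (hv : C.Lam.IsVertex v) :
    ∃ m, C.Lam.deg (C.Xi v) = Fin.snoc (0 : Fin k → ℕ) m := by
  obtain ⟨n, w, hw, rfl⟩ := C.vertex_rep hv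
  exact ⟨n, by rw [C.Xi_eq, C.xi_deg n hw]⟩

lemma Xi_fd {v : C.Lam.M} (hv : C.Lam.IsVertex v) (i : Fin k) :
    C.Lam.deg (C.Xi v) i.castSucc = 0 := by
  obtain ⟨m, hm⟩ := C.Xi_deg hv
  rw [hm]
  simp

lemma Xi_rng0 {v : C.Lam.M} (hv : C.Lam.IsVertex v) :
    ∃ u, (C.L 0).IsVertex u ∧ C.Lam.rng (C.Xi v) = C.ι 0 u := by
  obtain ⟨n, w, hw, rfl⟩ := C.vertex_rep hv
  rw [C.Xi_eq, C.xi_rng n hw]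
  exact ⟨C.pIter n w, C.pIter_vertex n hw, rfl⟩

lemma composable_Xi (z : C.Lam.M) : C.Lam.Composable (C.Xi (C.Lam.rng z)) z := by
  show C.Lam.src _ = _
  rw [C.Xi_src (C.Lam.isVertex_rng z)]

lemma key (z : C.Lam.M) : ∃ y : (C.L 0).M,
    C.Lam.Composable (C.ι 0 y) (C.Xi (C.Lam.src z)) ∧
    C.Lam.comp (C.Xi (C.Lam.rng z)) z = C.Lam.comp (C.ι 0 y) (C.Xi (C.Lam.src z)) := by
  set W := C.Lam.comp (C.Xi (C.Lam.rng z)) z with hW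
  have hcz : C.Lam.Composable (C.Xi (C.Lam.rng z)) z := C.composable_Xi z
  obtain ⟨⟨μ, ν⟩, ⟨hc, hcomp, hdμ, hdν⟩, -⟩ := C.Lam.factor W _ _ (deg_split W)
  dsimp only at hc hcomp hdμ hdν
  obtain ⟨n, x, hx⟩ := C.ι_union μ (by rw [hdμ]; simp)
  obtain ⟨u, hu, hru⟩ := C.Xi_rng0 (C.Lam.isVertex_rng z)
  have hrμ : C.Lam.rng μ = C.ι 0 u := by
    have h1 : C.Lam.rng W = C.Lam.rng μ := by rw [← hcomp, C.Lam.rng_comp _ _ hc]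
    have h2 : C.Lam.rng W = C.ι 0 u := by rw [hW, C.Lam.rng_comp _ _ hcz, hru]
    rw [← h1, h2]
  obtain rfl : n = 0 := by
    rw [← hx, C.ι_rng] at hrμ
    exact C.ι_disjoint _ _ _ _ hrμ
  obtain ⟨m, w', hw', hv⟩ := C.vertex_rep (C.Lam.isVertex_src z)
  have hsν : C.Lam.src ν = C.Lam.src z := by
    have h1 : C.Lam.src W = C.Lam.src ν := by rw [← hcomp, C.Lam.src_comp _ _ hc]
    have h2 : C.Lam.src W = C.Lam.src z := by rw [hW, C.Lam.src_comp _ _ hcz]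
    rw [← h1, h2]
  have hrν : C.Lam.rng ν = C.ι 0 ((C.L 0).src x) := by
    rw [← hc, ← hx, C.ι_src]
  have hfdν : ∀ i : Fin k, C.Lam.deg ν i.castSucc = 0 := by
    intro i
    rw [hdν]
    simp
  obtain ⟨Q, hQ1, hQ2, hQ3⟩ := C.onlyLast_src (C.Lam.deg W (Fin.last k)) ν hfdν
    (by rw [hdν]; simp) 0 ((C.L 0).src x) ((C.L 0).isVertex_src x) hrν
  have hm : C.Lam.deg W (Fin.last k) = m := by
    rw [hsν, ← hv] at hQ3
    have := C.ι_disjoint _ _ _ _ hQ3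
    omega
  have hνXi : ν = C.Xi (C.Lam.src z) := by
    rw [← hv, C.Xi_eq]
    refine C.onlyLast_unique m ν (C.xi m w') hfdν ?_ ?_ ?_ ?_
    · intro i
      rw [C.xi_deg m hw']
      simp
    · rw [hdν, ← hm]
      simp
    · rw [C.xi_deg m hw']
      simp
    · rw [hsν, C.xi_src m hw']
      exact hv.symm
  refine ⟨x, ?_, ?_⟩
  · show C.Lam.src _ = _
    rw [hx, hc, hνXi]
  · rw [hx, ← hνXi]
    exact hcomp.symm

/-- The projection `π : Λ → Λ₁`. -/
noncomputable def proj (z : C.Lam.M) : (C.L 0).M := (C.key z).choose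

lemma proj_spec (z : C.Lam.M) :
    C.Lam.Composable (C.ι 0 (C.proj z)) (C.Xi (C.Lam.src z)) ∧
    C.Lam.comp (C.Xi (C.Lam.rng z)) z
      = C.Lam.comp (C.ι 0 (C.proj z)) (C.Xi (C.Lam.src z)) :=
  (C.key z).choose_spec

lemma proj_unique (z : C.Lam.M) {y : (C.L 0).M} {β : C.Lam.M}
    (hcb : C.Lam.Composable (C.ι 0 y) β)
    (hβ : ∀ i : Fin k, C.Lam.deg β i.castSucc = 0)
    (heq : C.Lam.comp (C.Xi (C.Lam.rng z)) z = C.Lam.comp (C.ι 0 y) β) :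
    y = C.proj z := by
  set W := C.Lam.comp (C.Xi (C.Lam.rng z)) z with hW
  obtain ⟨hc0, he0⟩ := C.proj_spec z
  rw [← hW] at he0
  obtain ⟨P, hP, hu⟩ := C.Lam.factor W _ _ (deg_split W)
  have hdW : C.Lam.deg W = C.Lam.deg (C.ι 0 y) + C.Lam.deg β := by
    rw [heq, C.Lam.deg_comp _ _ hcb]
  have hdW' : C.Lam.deg W
      = C.Lam.deg (C.ι 0 (C.proj z)) + C.Lam.deg (C.Xi (C.Lam.src z)) := by
    rw [he0, C.Lam.deg_comp _ _ hc0]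
  have d1 : C.Lam.deg (C.ι 0 y) = Fin.snoc (fun i => C.Lam.deg W i.castSucc) 0 := by
    funext i
    refine Fin.lastCases ?_ ?_ i
    · rw [C.ι_deg]
      simp
    · intro i
      simp only [Fin.snoc_castSucc]
      have h := congrFun hdW (Fin.castSucc i)
      rw [Pi.add_apply, hβ _, add_zero] at h
      exact h.symm
  have d2 : C.Lam.deg β = Fin.snoc (0 : Fin k → ℕ) (C.Lam.deg W (Fin.last k)) := by
    funext i
    refine Fin.lastCases ?_ ?_ i
    · simp only [Fin.snoc_last]
      have h := congrFun hdW (Fin.last k)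
      rw [Pi.add_apply, C.ι_deg, Fin.snoc_last, zero_add] at h
      exact h.symm
    · intro i
      rw [Fin.snoc_castSucc, hβ i]
      rfl
  have d1' : C.Lam.deg (C.ι 0 (C.proj z))
      = Fin.snoc (fun i => C.Lam.deg W i.castSucc) 0 := by
    funext i
    refine Fin.lastCases ?_ ?_ i
    · rw [C.ι_deg]
      simp
    · intro i
      simp only [Fin.snoc_castSucc]
      have h := congrFun hdW' (Fin.castSucc i)
      rw [Pi.add_apply, C.Xi_fd (C.Lam.isVertex_src z) _, add_zero] at h
      exact h.symm
  have d2' : C.Lam.deg (C.Xi (C.Lam.src z))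
      = Fin.snoc (0 : Fin k → ℕ) (C.Lam.deg W (Fin.last k)) := by
    funext i
    refine Fin.lastCases ?_ ?_ i
    · simp only [Fin.snoc_last]
      have h := congrFun hdW' (Fin.last k)
      rw [Pi.add_apply, C.ι_deg, Fin.snoc_last, zero_add] at h
      exact h.symm
    · intro i
      rw [Fin.snoc_castSucc, C.Xi_fd (C.Lam.isVertex_src z) i]
      rfl
  have e1 := hu (C.ι 0 y, β) ⟨hcb, heq.symm, d1, d2⟩
  have e2 := hu (C.ι 0 (C.proj z), C.Xi (C.Lam.src z)) ⟨hc0, he0.symm, d1', d2'⟩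
  have h1 : C.ι 0 y = C.ι 0 (C.proj z) := congrArg Prod.fst (e1.trans e2.symm)
  exact C.ι_inj 0 h1

lemma proj_vertex {v : C.Lam.M} (hv : C.Lam.IsVertex v) :
    (C.L 0).IsVertex (C.proj v) ∧ C.ι 0 (C.proj v) = C.Lam.rng (C.Xi v) := by
  obtain ⟨hc0, he0⟩ := C.proj_spec v
  rw [hv] at he0
  rw [vertex_src_eq hv] at hc0 he0
  have h1 : C.Lam.comp (C.Xi v) v = C.Xi v := by
    have h := C.Lam.comp_id (C.Xi v)
    rw [C.Xi_src hv] at h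
    exact h
  rw [h1] at he0
  have hd : C.Lam.deg (C.Xi v)
      = C.Lam.deg (C.ι 0 (C.proj v)) + C.Lam.deg (C.Xi v) := by
    conv_lhs => rw [he0]
    exact C.Lam.deg_comp _ _ hc0
  have hd0 : C.Lam.deg (C.ι 0 (C.proj v)) = 0 := by
    funext i
    have h := congrFun hd i
    simp only [Pi.add_apply] at h
    simp only [Pi.zero_apply]
    omega
  have hpv : (C.L 0).IsVertex (C.proj v) := by
    apply deg_zero_vertex
    funext i
    have h := congrFun hd0 i.castSucc
    rw [C.ι_deg] at h
    simpa using h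
  refine ⟨hpv, ?_⟩
  have h2 : C.Lam.src (C.ι 0 (C.proj v)) = C.ι 0 (C.proj v) := by
    rw [C.ι_src, vertex_src_eq hpv]
  rw [← h2]
  exact hc0

lemma proj_src (z : C.Lam.M) : (C.L 0).src (C.proj z) = C.proj (C.Lam.src z) := by
  have hc := (C.proj_spec z).1
  have hv := C.proj_vertex (C.Lam.isVertex_src z)
  refine C.ι_inj 0 ?_
  rw [← C.ι_src, hv.2]
  exact hc

lemma proj_rng (z : C.Lam.M) : (C.L 0).rng (C.proj z) = C.proj (C.Lam.rng z) := by
  obtain ⟨hc0, he0⟩ := C.proj_spec z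
  have hv := C.proj_vertex (C.Lam.isVertex_rng z)
  refine C.ι_inj 0 ?_
  rw [← C.ι_rng, hv.2]
  rw [← C.Lam.rng_comp _ _ hc0, ← he0, C.Lam.rng_comp _ _ (C.composable_Xi z)]

lemma composable_proj {z z' : C.Lam.M} (h : C.Lam.Composable z z') :
    (C.L 0).Composable (C.proj z) (C.proj z') := by
  show (C.L 0).src _ = _
  rw [C.proj_src, C.proj_rng, show C.Lam.src z = C.Lam.rng z' from h]

lemma proj_comp {z z' : C.Lam.M} (h : C.Lam.Composable z z') :
    C.proj (C.Lam.comp z z') = (C.L 0).comp (C.proj z) (C.proj z') := by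
  have h1 : C.Lam.Composable (C.Xi (C.Lam.rng z)) z := C.composable_Xi z
  have hsz : C.Lam.src (C.Lam.comp z z') = C.Lam.src z' := C.Lam.src_comp z z' h
  have hrz : C.Lam.rng (C.Lam.comp z z') = C.Lam.rng z := C.Lam.rng_comp z z' h
  have hXz'c : C.Lam.Composable (C.Xi (C.Lam.src z)) z' := by
    show C.Lam.src _ = _
    rw [C.Xi_src (C.Lam.isVertex_src z)]
    exact h
  have hcc : C.Lam.Composable (C.ι 0 (C.proj z)) (C.ι 0 (C.proj z')) := by
    show C.Lam.src _ = _
    rw [C.ι_src, C.ι_rng]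
    exact congrArg (C.ι 0) (C.composable_proj h)
  have heq : C.Lam.comp (C.Xi (C.Lam.rng (C.Lam.comp z z'))) (C.Lam.comp z z')
      = C.Lam.comp (C.ι 0 ((C.L 0).comp (C.proj z) (C.proj z')))
          (C.Xi (C.Lam.src (C.Lam.comp z z'))) := by
    rw [hrz, hsz]
    rw [← C.Lam.comp_assoc _ _ _ h1 h, (C.proj_spec z).2,
      C.Lam.comp_assoc _ _ _ (C.proj_spec z).1 hXz'c,
      show C.Lam.src z = C.Lam.rng z' from h, (C.proj_spec z').2,
      ← C.Lam.comp_assoc _ _ _ hcc (C.proj_spec z').1,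
      C.ι_comp 0 _ _ (C.composable_proj h)]
  have hcb : C.Lam.Composable (C.ι 0 ((C.L 0).comp (C.proj z) (C.proj z')))
      (C.Xi (C.Lam.src (C.Lam.comp z z'))) := by
    show C.Lam.src _ = _
    rw [C.ι_src, (C.L 0).src_comp _ _ (C.composable_proj h), hsz, ← C.ι_src]
    exact (C.proj_spec z').1
  exact (C.proj_unique _ hcb (C.Xi_fd (C.Lam.isVertex_src _)) heq).symm

lemma proj_iota (x : (C.L 0).M) : C.proj (C.ι 0 x) = x := by
  have hcb : C.Lam.Composable (C.ι 0 x) (C.ι 0 ((C.L 0).src x)) := by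
    show C.Lam.src _ = _
    rw [C.ι_src, C.ι_rng, (C.L 0).rng_src]
  have hβ : ∀ i : Fin k, C.Lam.deg (C.ι 0 ((C.L 0).src x)) i.castSucc = 0 := by
    intro i
    rw [C.ι_deg]
    simp [(C.L 0).deg_src]
  have heq : C.Lam.comp (C.Xi (C.Lam.rng (C.ι 0 x))) (C.ι 0 x)
      = C.Lam.comp (C.ι 0 x) (C.ι 0 ((C.L 0).src x)) := by
    rw [C.ι_rng, C.Xi_eq]
    show C.Lam.comp (C.ι 0 _) _ = _
    rw [C.ι_comp 0 _ _ ((C.L 0).src_rng x), (C.L 0).id_comp,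
      C.ι_comp 0 _ _ ((C.L 0).rng_src x).symm, (C.L 0).comp_id]
  exact (C.proj_unique _ hcb hβ heq).symm

lemma proj_vertex' {v : C.Lam.M} (hv : C.Lam.IsVertex v) :
    (C.L 0).IsVertex (C.proj v) := (C.proj_vertex hv).1

lemma composable_iota {x y : (C.L 0).M} (h : (C.L 0).Composable x y) :
    C.Lam.Composable (C.ι 0 x) (C.ι 0 y) := by
  show C.Lam.src _ = _
  rw [C.ι_src, C.ι_rng]
  exact congrArg (C.ι 0) h

lemma composable_iota_iff {x y : (C.L 0).M} :
    C.Lam.Composable (C.ι 0 x) (C.ι 0 y) ↔ (C.L 0).Composable x y := by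
  constructor
  · intro h
    have h' : C.ι 0 ((C.L 0).src x) = C.ι 0 ((C.L 0).rng y) := by
      rw [← C.ι_src, ← C.ι_rng]
      exact h
    exact C.ι_inj 0 h'
  · exact C.composable_iota

variable {A : Type*} [AddCommGroup A]

lemma mem_Z2_iff {Λ : KGraph k} {c : Λ.M → Λ.M → A} :
    c ∈ Z2 Λ A ↔ Λ.IsCocycle2 c := Iff.rfl

lemma mem_B2_iff {Λ : KGraph k} {c : Λ.M → Λ.M → A} :
    c ∈ B2 Λ A ↔ ∃ b, Λ.IsCochain1 b ∧ c = Λ.delta1 b := Iff.rfl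

lemma res_Z2 {c : C.Lam.M → C.Lam.M → A} (hc : C.Lam.IsCocycle2 c) :
    (C.L 0).IsCocycle2 (C.res c) := by
  obtain ⟨h1, h2, h3⟩ := hc
  refine ⟨?_, ?_, ?_⟩
  · intro x y hxy
    exact h1 _ _ (fun hc' => hxy (C.composable_iota_iff.mp hc'))
  · intro x y hxy
    refine h2 _ _ ?_
    rcases hxy with hx | hx
    · exact Or.inl (C.iota_vertex 0 hx)
    · exact Or.inr (C.iota_vertex 0 hx)
  · intro x y z hxy hyz
    have h := h3 _ _ _ (C.composable_iota hxy) (C.composable_iota hyz)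
    rw [C.ι_comp 0 _ _ hxy, C.ι_comp 0 _ _ hyz] at h
    exact h

lemma iota_cochain {b : C.Lam.M → A} (hb : C.Lam.IsCochain1 b) :
    (C.L 0).IsCochain1 (fun x => b (C.ι 0 x)) :=
  fun _ hv => hb _ (C.iota_vertex 0 hv)

lemma proj_cochain {b : (C.L 0).M → A} (hb : (C.L 0).IsCochain1 b) :
    C.Lam.IsCochain1 (fun z => b (C.proj z)) :=
  fun _ hv => hb _ (C.proj_vertex' hv)

lemma res_delta (b : C.Lam.M → A) :
    C.res (C.Lam.delta1 b) = (C.L 0).delta1 (fun x => b (C.ι 0 x)) := by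
  funext x y
  show C.Lam.delta1 b (C.ι 0 x) (C.ι 0 y) = _
  unfold KGraph.delta1
  by_cases h : (C.L 0).Composable x y
  · rw [if_pos (C.composable_iota h), if_pos h, C.ι_comp 0 _ _ h]
  · rw [if_neg (fun hc => h (C.composable_iota_iff.mp hc)), if_neg h]

lemma res_B2 {c : C.Lam.M → C.Lam.M → A} (hc : c ∈ B2 C.Lam A) :
    C.res c ∈ B2 (C.L 0) A := by
  obtain ⟨b, hb, rfl⟩ := hc
  exact ⟨fun x => b (C.ι 0 x), C.iota_cochain hb, C.res_delta b⟩

lemma pf_Z2 {c : (C.L 0).M → (C.L 0).M → A} (hc : (C.L 0).IsCocycle2 c) :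
    C.Lam.IsCocycle2 (C.pfwd C.proj c) := by
  obtain ⟨h1, h2, h3⟩ := hc
  refine ⟨?_, ?_, ?_⟩
  · intro x y hxy
    unfold CovSeqLimit.pfwd
    rw [if_neg hxy]
  · intro x y hxy
    unfold CovSeqLimit.pfwd
    by_cases h : C.Lam.Composable x y
    · rw [if_pos h]
      refine h2 _ _ ?_
      rcases hxy with hx | hx
      · exact Or.inl (C.proj_vertex' hx)
      · exact Or.inr (C.proj_vertex' hx)
    · rw [if_neg h]
  · intro x y z hxy hyz
    have hl := composable_comp_left hxy hyz
    have hr := composable_comp_right hxy hyz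
    unfold CovSeqLimit.pfwd
    rw [if_pos hxy, if_pos hyz, if_pos hl, if_pos hr, C.proj_comp hxy, C.proj_comp hyz]
    exact h3 _ _ _ (C.composable_proj hxy) (C.composable_proj hyz)

lemma pf_delta (b : (C.L 0).M → A) :
    C.pfwd C.proj ((C.L 0).delta1 b) = C.Lam.delta1 (fun z => b (C.proj z)) := by
  funext x y
  unfold CovSeqLimit.pfwd KGraph.delta1
  by_cases h : C.Lam.Composable x y
  · rw [if_pos h, if_pos (C.composable_proj h), if_pos h]
    dsimp only
    rw [C.proj_comp h]
  · rw [if_neg h, if_neg h]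

lemma pf_B2 {c : (C.L 0).M → (C.L 0).M → A} (hc : c ∈ B2 (C.L 0) A) :
    C.pfwd C.proj c ∈ B2 C.Lam A := by
  obtain ⟨b, hb, rfl⟩ := hc
  exact ⟨fun z => b (C.proj z), C.proj_cochain hb, C.pf_delta b⟩

lemma res_pf {c : (C.L 0).M → (C.L 0).M → A} (hc : (C.L 0).IsCocycle2 c) :
    C.res (C.pfwd C.proj c) = c := by
  funext x y
  show C.pfwd C.proj c (C.ι 0 x) (C.ι 0 y) = c x y
  unfold CovSeqLimit.pfwd
  by_cases h : (C.L 0).Composable x y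
  · rw [if_pos (C.composable_iota h), C.proj_iota, C.proj_iota]
  · rw [if_neg (fun hc' => h (C.composable_iota_iff.mp hc')), hc.1 x y h]

/-- The 1-cochain trivialising `c - π_*(c|_{Λ₁})`. -/
noncomputable def bb (c : C.Lam.M → C.Lam.M → A) : C.Lam.M → A :=
  fun z => c (C.Xi (C.Lam.rng z)) z - c (C.ι 0 (C.proj z)) (C.Xi (C.Lam.src z))

lemma bb_cochain {c : C.Lam.M → C.Lam.M → A} (hc : C.Lam.IsCocycle2 c) :
    C.Lam.IsCochain1 (C.bb c) := by
  intro v hv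
  show c _ v - c _ _ = 0
  rw [hc.2.1 _ _ (Or.inr hv),
    hc.2.1 _ _ (Or.inl (C.iota_vertex 0 (C.proj_vertex' hv))), sub_zero]

lemma main_delta {c : C.Lam.M → C.Lam.M → A} (hc : C.Lam.IsCocycle2 c) :
    c - C.pfwd C.proj (C.res c) = C.Lam.delta1 (C.bb c) := by
  obtain ⟨h1, h2, h3⟩ := hc
  funext x y
  show c x y - C.pfwd C.proj (C.res c) x y = _
  unfold CovSeqLimit.pfwd KGraph.delta1
  by_cases h : C.Lam.Composable x y
  case neg => rw [if_neg h, if_neg h, h1 x y h, sub_zero]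
  case pos =>
  rw [if_pos h, if_pos h]
  show c x y - c (C.ι 0 (C.proj x)) (C.ι 0 (C.proj y)) = _
  have hsrxy : C.Lam.src x = C.Lam.rng y := h
  have hsxy : C.Lam.src (C.Lam.comp x y) = C.Lam.src y := C.Lam.src_comp x y h
  have hrxy : C.Lam.rng (C.Lam.comp x y) = C.Lam.rng x := C.Lam.rng_comp x y h
  have hcx : C.Lam.Composable (C.Xi (C.Lam.rng x)) x := C.composable_Xi x
  have hcy : C.Lam.Composable (C.Xi (C.Lam.rng y)) y := C.composable_Xi y
  obtain ⟨hcPx, hePx⟩ := C.proj_spec x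
  obtain ⟨hcPy, hePy⟩ := C.proj_spec y
  rw [hsrxy] at hcPx hePx
  have hPP : C.Lam.Composable (C.ι 0 (C.proj x)) (C.ι 0 (C.proj y)) :=
    C.composable_iota (C.composable_proj h)
  simp only [CovSeqLimit.bb, hsrxy, hsxy, hrxy, C.proj_comp h,
    ← C.ι_comp 0 _ _ (C.composable_proj h)]
  have i1 := h3 (C.Xi (C.Lam.rng x)) x y hcx h
  have i2 := h3 (C.ι 0 (C.proj x)) (C.Xi (C.Lam.rng y)) y hcPx hcy
  rw [← hePx, hePy] at i2
  have i3 := h3 (C.ι 0 (C.proj x)) (C.ι 0 (C.proj y)) (C.Xi (C.Lam.src y)) hPP hcPy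
  have e5 : c (C.Xi (C.Lam.rng x)) (C.Lam.comp x y)
      = c (C.Xi (C.Lam.rng x)) x + c (C.Lam.comp (C.Xi (C.Lam.rng x)) x) y
        - c x y := by
    rw [eq_sub_iff_add_eq, add_comm]
    exact i1.symm
  have eB : c (C.Lam.comp (C.Xi (C.Lam.rng x)) x) y
      = c (C.Xi (C.Lam.rng y)) y
        + c (C.ι 0 (C.proj x)) (C.Lam.comp (C.ι 0 (C.proj y)) (C.Xi (C.Lam.src y)))
        - c (C.ι 0 (C.proj x)) (C.Xi (C.Lam.rng y)) := by
    rw [eq_sub_iff_add_eq, add_comm]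
    exact i2
  have eD : c (C.ι 0 (C.proj x)) (C.Lam.comp (C.ι 0 (C.proj y)) (C.Xi (C.Lam.src y)))
      = c (C.ι 0 (C.proj x)) (C.ι 0 (C.proj y))
        + c (C.Lam.comp (C.ι 0 (C.proj x)) (C.ι 0 (C.proj y))) (C.Xi (C.Lam.src y))
        - c (C.ι 0 (C.proj y)) (C.Xi (C.Lam.src y)) := by
    rw [eq_sub_iff_add_eq, add_comm]
    exact i3.symm
  rw [e5, eB, eD]
  abel

variable (A)

/-- The restriction map as a homomorphism `Z²(Λ,A) →+ Z²(Λ₁,A)`. -/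
noncomputable def resZ : Z2 C.Lam A →+ Z2 (C.L 0) A :=
  AddMonoidHom.mk' (fun c => ⟨C.res c.1, C.res_Z2 c.2⟩)
    (fun a b => Subtype.ext rfl)

/-- The map `π_*` as a homomorphism `Z²(Λ₁,A) →+ Z²(Λ,A)`. -/
noncomputable def pfZ : Z2 (C.L 0) A →+ Z2 C.Lam A :=
  AddMonoidHom.mk' (fun c => ⟨C.pfwd C.proj c.1, C.pf_Z2 c.2⟩)
    (fun a b => Subtype.ext (by
      funext x y
      show C.pfwd C.proj (a.1 + b.1) x y
        = C.pfwd C.proj a.1 x y + C.pfwd C.proj b.1 x y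
      unfold CovSeqLimit.pfwd
      by_cases h : C.Lam.Composable x y
      · rw [if_pos h, if_pos h, if_pos h]
        rfl
      · rw [if_neg h, if_neg h, if_neg h, add_zero]))

/-- The induced map on `H²` by restriction. -/
noncomputable def phi : H2 C.Lam A →+ H2 (C.L 0) A :=
  QuotientAddGroup.map _ _ (C.resZ A) (by
    intro c hcB
    rw [AddSubgroup.mem_comap, AddSubgroup.mem_addSubgroupOf]
    rw [AddSubgroup.mem_addSubgroupOf] at hcB
    exact C.res_B2 hcB)

/-- The induced map on `H²` by `π_*`. -/
noncomputable def psi : H2 (C.L 0) A →+ H2 C.Lam A :=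
  QuotientAddGroup.map _ _ (C.pfZ A) (by
    intro c hcB
    rw [AddSubgroup.mem_comap, AddSubgroup.mem_addSubgroupOf]
    rw [AddSubgroup.mem_addSubgroupOf] at hcB
    exact C.pf_B2 hcB)

lemma psi_phi (x : H2 C.Lam A) : C.psi A (C.phi A x) = x := by
  refine QuotientAddGroup.induction_on x ?_
  intro c
  show QuotientAddGroup.mk _ = _
  refine QuotientAddGroup.eq.mpr ?_
  rw [AddSubgroup.mem_addSubgroupOf]
  show -(C.pfwd C.proj (C.res c.1)) + c.1 ∈ B2 C.Lam A
  refine ⟨C.bb c.1, C.bb_cochain c.2, ?_⟩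
  rw [← C.main_delta c.2]
  abel

lemma phi_psi (x : H2 (C.L 0) A) : C.phi A (C.psi A x) = x := by
  refine QuotientAddGroup.induction_on x ?_
  intro c
  show QuotientAddGroup.mk _ = _
  congr 1
  exact Subtype.ext (C.res_pf c.2)

/-- The isomorphism `H²(Λ,A) ≅ H²(Λ₁,A)` induced by restriction. -/
noncomputable def isoH2 : H2 C.Lam A ≃+ H2 (C.L 0) A :=
  AddEquiv.mk ⟨C.phi A, C.psi A, C.psi_phi A, C.phi_psi A⟩ ((C.phi A).map_add)

end CovSeqLimit

end Aux
open KGraph in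
/-- The restriction map `c ↦ c|_{Λ₁}` maps `Z²(Λ,A)` to `Z²(Λ₁,A)`
and `B²(Λ,A)` into `B²(Λ₁,A)`, and induces an isomorphism
`H²(Λ, A) ≅ H²(Λ₁, A)`. -/
theorem restriction_induces_H2_iso {k : ℕ} (C : CovSeqLimit k)
    (A : Type*) [AddCommGroup A] :
    (∀ c ∈ Z2 C.Lam A, C.res c ∈ Z2 (C.L 0) A) ∧
    (∀ c ∈ B2 C.Lam A, C.res c ∈ B2 (C.L 0) A) ∧
    ∃ φ : H2 C.Lam A ≃+ H2 (C.L 0) A,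
      ∀ (c : C.Lam.M → C.Lam.M → A) (hc : c ∈ Z2 C.Lam A)
        (hc' : C.res c ∈ Z2 (C.L 0) A),
        φ (QuotientAddGroup.mk ⟨c, hc⟩) = QuotientAddGroup.mk ⟨C.res c, hc'⟩ := by
  refine ⟨fun c hc => C.res_Z2 hc, fun c hc => C.res_B2 hc, C.isoH2 A, ?_⟩
  intro c hc hc'
  show C.phi A (QuotientAddGroup.mk ⟨c, hc⟩) = _
  rfl
end

section
/- Let (E,w) be a singly connected weighted Bratteli diagram and let Λ = Λ_E be the associated rank-3 Bratteli diagram. Let F be the Bratteli diagram with F^0 = E^0 and F^1 = ⨆_{e ∈ E^1} {e} × ℤ/(w(s(e))/w(r(e)))ℤ, with r(e,i) = r(e) and s(e,i) = s(e). Then for each graph trace h on F there is a graph trace g_h on Λ with g_h(ι_v(v,j)) = h(v) for all v ∈ F^0 and j ∈ ℤ/w(v)ℤ, and the map h ↦ g_h is a bijection between graph traces on F and graph traces on Λ. -/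
open scoped BigOperators NNReal ENNReal

/-- The `2`-graph `Δ(n) = T₂ ×₁ ℤ/nℤ`: morphisms are pairs `((s,t), i)` with degree
`(s,t)`, range `i`, source `i + s + t`, and composition
`((s,t), i)((s',t'), i+s+t) = ((s+s',t+t'), i)`. -/
def Delta (n : ℕ) : KGraph 2 where
  M := (ℕ × ℕ) × ZMod n
  countableM := by
    cases n with
    | zero => exact inferInstanceAs (Countable ((ℕ × ℕ) × ℤ))
    | succ m => exact inferInstanceAs (Countable ((ℕ × ℕ) × Fin (m + 1)))
  nonemptyM := by infer_instance
  src x := ((0, 0), x.2 + x.1.1 + x.1.2)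
  rng x := ((0, 0), x.2)
  comp x y := ((x.1.1 + y.1.1, x.1.2 + y.1.2), x.2)
  deg x := ![x.1.1, x.1.2]
  src_src x := by simp
  rng_src x := by simp
  src_rng x := by simp
  rng_rng x := by simp
  comp_id x := by simp
  id_comp x := by simp
  src_comp x y h := by
    have h2 : x.2 + (x.1.1 : ZMod n) + (x.1.2 : ZMod n) = y.2 :=
      congrArg Prod.snd h
    refine Prod.ext rfl ?_
    push_cast
    rw [← h2]
    ring
  rng_comp x y h := rfl
  comp_assoc x y z h1 h2 := by
    refine Prod.ext (Prod.ext ?_ ?_) rfl <;> simp [Nat.add_assoc]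
  deg_src x := by
    funext i
    fin_cases i <;> rfl
  deg_rng x := by
    funext i
    fin_cases i <;> rfl
  deg_comp x y h := by
    funext i
    fin_cases i <;> simp
  factor x m m' h := by
    refine ⟨(((m 0, m 1), x.2), ((m' 0, m' 1), x.2 + m 0 + m 1)), ⟨rfl, ?_, ?_, ?_⟩, ?_⟩
    · have h0 : x.1.1 = m 0 + m' 0 := by
        have := congrFun h 0; simpa using this
      have h1 : x.1.2 = m 1 + m' 1 := by
        have := congrFun h 1; simpa using this
      refine Prod.ext (Prod.ext ?_ ?_) rfl <;> simp [h0, h1]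
    · funext i; fin_cases i <;> rfl
    · funext i; fin_cases i <;> rfl
    · rintro ⟨a, b⟩ ⟨hcomp, heq, hda, hdb⟩
      have ha0 : a.1.1 = m 0 := by
        have := congrFun hda 0; simpa using this
      have ha1 : a.1.2 = m 1 := by
        have := congrFun hda 1; simpa using this
      have hb0 : b.1.1 = m' 0 := by
        have := congrFun hdb 0; simpa using this
      have hb1 : b.1.2 = m' 1 := by
        have := congrFun hdb 1; simpa using this
      have ha2 : a.2 = x.2 := congrArg (fun z => z.2) heq
      have hb2 : b.2 = x.2 + (m 0 : ZMod n) + (m 1 : ZMod n) := by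
        have := congrArg Prod.snd hcomp
        simp only at this
        rw [← this, ha2, ha0, ha1]
      refine Prod.ext (Prod.ext (Prod.ext ha0 ha1) ha2) (Prod.ext (Prod.ext hb0 hb1) hb2)

/-- The `𝕋`-valued `2`-cocycle `d_* c_θ` on `Δ(n)` induced by the cocycle
`c_θ(m, m') = e^{2πiθ m₂ m'₁}` on `ℤ²`. -/
noncomputable def deltaCocycle (n : ℕ) (θ : ℝ) : (Delta n).M → (Delta n).M → ℂ :=
  fun x y => Complex.exp (2 * Real.pi * Complex.I * θ * ((x.1.2 : ℂ) * (y.1.1 : ℂ)))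
/-- A Bratteli diagram: a directed graph whose vertices are partitioned into finite
nonempty levels (level `n` here corresponds to `E_{n+1}^0` in the paper), each edge
pointing from a vertex at level `n+1` (its source) to one at level `n` (its range),
such that every vertex receives an edge and every vertex not at level `0` emits one. -/
structure BratteliDiagram where
  V : Type
  Edge : Type
  esrc : Edge → V
  erng : Edge → V
  level : V → ℕ
  level_src : ∀ e, level (esrc e) = level (erng e) + 1
  level_finite : ∀ n, {v | level v = n}.Finite
  level_nonempty : ∀ n, ∃ v, level v = n
  rcv : ∀ v, ∃ e, erng e = v
  emit : ∀ v, level v ≠ 0 → ∃ e, esrc e = v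

namespace BratteliDiagram

/-- A Bratteli diagram is singly connected if there is at most one edge between any
two vertices. -/
def SinglyConnected (E : BratteliDiagram) : Prop :=
  ∀ e f : E.Edge, E.erng e = E.erng f → E.esrc e = E.esrc f → e = f

/-- A graph trace on a Bratteli diagram. -/
def IsTrace (E : BratteliDiagram) (h : E.V → ℝ≥0) : Prop :=
  ∀ v, h v = ∑ᶠ e ∈ {e | E.erng e = v}, h (E.esrc e)

/-- `HasPath E n v u`: there is a path of length `n` in `E` with range `v` and
source `u`. -/
def HasPath (E : BratteliDiagram) : ℕ → E.V → E.V → Prop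
  | 0, v, u => v = u
  | n + 1, v, u => ∃ e, E.erng e = v ∧ HasPath E n (E.esrc e) u

/-- A Bratteli diagram is cofinal if for all `v, v'` there exists `n` such that the
source of every path of length `n` with range `v'` is connected to `v`. -/
def Cofinal (E : BratteliDiagram) : Prop :=
  ∀ v v' : E.V, ∃ n : ℕ, ∀ u : E.V, E.HasPath n v' u → ∃ m : ℕ, E.HasPath m v u

end BratteliDiagram

open KGraph

/-- The `(k+1)`-graph `Λ_E` associated to a Bratteli diagram `E` of covering maps
`p_f : Λ_{s(f)} → Λ_{r(f)}` between `k`-graphs `(Λ_v)_{v ∈ E^0}`, together with its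
defining data: injective functors `ι_v : Λ_v → Λ_E` and a bijection
`e : ⨆_{v ∉ E_1^0} Λ_v^0 × E^1 v → Λ_E^{e_{k+1}}` satisfying properties (1)–(5). -/
structure BCSLimit {k : ℕ} (E : BratteliDiagram) (Λv : E.V → KGraph k)
    (pe : ∀ f : E.Edge, (Λv (E.esrc f)).M → (Λv (E.erng f)).M) where
  Lam : KGraph (k + 1)
  ι : ∀ v, (Λv v).M → Lam.M
  ι_inj : ∀ v, Function.Injective (ι v)
  ι_src : ∀ v x, Lam.src (ι v x) = ι v ((Λv v).src x)
  ι_rng : ∀ v x, Lam.rng (ι v x) = ι v ((Λv v).rng x)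
  ι_comp : ∀ v x y, (Λv v).Composable x y →
    Lam.comp (ι v x) (ι v y) = ι v ((Λv v).comp x y)
  ι_deg : ∀ v x, Lam.deg (ι v x) = Fin.snoc ((Λv v).deg x) 0
  ι_disjoint : ∀ v u x y, ι v x = ι u y → v = u
  ι_union : ∀ z : Lam.M, Lam.deg z (Fin.last k) = 0 → ∃ v x, ι v x = z
  edge : (Σ f : E.Edge, (Λv (E.esrc f)).M) → Lam.M
  edge_deg : ∀ q : Σ f : E.Edge, (Λv (E.esrc f)).M, (Λv (E.esrc q.1)).IsVertex q.2 →
    Lam.deg (edge q) = Fin.snoc (fun _ : Fin k => 0) 1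
  edge_injOn : Set.InjOn edge {q | (Λv (E.esrc q.1)).IsVertex q.2}
  edge_surj : ∀ z : Lam.M, Lam.deg z = Fin.snoc (fun _ : Fin k => 0) 1 →
    ∃ q, (Λv (E.esrc q.1)).IsVertex q.2 ∧ edge q = z
  edge_src : ∀ (f : E.Edge) (x : (Λv (E.esrc f)).M), (Λv (E.esrc f)).IsVertex x →
    Lam.src (edge ⟨f, x⟩) = ι (E.esrc f) x
  edge_rng : ∀ (f : E.Edge) (x : (Λv (E.esrc f)).M), (Λv (E.esrc f)).IsVertex x →
    Lam.rng (edge ⟨f, x⟩) = ι (E.erng f) (pe f x)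
  edge_comm : ∀ (f : E.Edge) (x : (Λv (E.esrc f)).M),
    Lam.comp (edge ⟨f, (Λv (E.esrc f)).rng x⟩) (ι (E.esrc f) x) =
      Lam.comp (ι (E.erng f) (pe f x)) (edge ⟨f, (Λv (E.esrc f)).src x⟩)
/-- The Bratteli diagram `F` associated to a weighted Bratteli diagram `(E, w)`:
`F⁰ = E⁰` and `F¹ = ⨆_{e ∈ E¹} {e} × ℤ/(w(s(e))/w(r(e)))ℤ`, with ranges and sources
inherited from `E`. -/
def Fdiag (E : BratteliDiagram) (w : E.V → ℕ) : BratteliDiagram where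
  V := E.V
  Edge := Σ f : E.Edge, ZMod (w (E.esrc f) / w (E.erng f))
  esrc q := E.esrc q.1
  erng q := E.erng q.1
  level := E.level
  level_src q := E.level_src q.1
  level_finite := E.level_finite
  level_nonempty := E.level_nonempty
  rcv v := by
    obtain ⟨e, he⟩ := E.rcv v
    exact ⟨⟨e, 0⟩, he⟩
  emit v h := by
    obtain ⟨e, he⟩ := E.emit v h
    exact ⟨⟨e, 0⟩, he⟩

section AuxGeneric

open Set

/-- Sum over a set of sigma pairs, grouped by the first component. -/
theorem finsum_mem_sigma_set {ι : Type*} {β : ι → Type*} {M : Type*} [AddCommMonoid M]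
    (A : Set ι) (B : ∀ i, Set (β i)) (hA : A.Finite) (hB : ∀ a ∈ A, (B a).Finite)
    (F : (Σ i, β i) → M) :
    ∑ᶠ q ∈ {q : Σ i, β i | q.1 ∈ A ∧ q.2 ∈ B q.1}, F q
      = ∑ᶠ a ∈ A, ∑ᶠ b ∈ B a, F ⟨a, b⟩ := by
  have hset : {q : Σ i, β i | q.1 ∈ A ∧ q.2 ∈ B q.1} = ⋃ a ∈ A, Sigma.mk a '' B a := by
    ext ⟨a, b⟩
    simp only [Set.mem_setOf_eq, Set.mem_iUnion, Set.mem_image]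
    constructor
    · rintro ⟨h1, h2⟩; exact ⟨a, h1, b, h2, rfl⟩
    · rintro ⟨a', h1, b', h2, h3⟩
      obtain ⟨rfl, h⟩ := Sigma.mk.inj_iff.mp h3
      cases h; exact ⟨h1, h2⟩
  rw [hset, finsum_mem_biUnion ?_ hA (fun a ha => (hB a ha).image _)]
  · refine finsum_mem_congr rfl fun a ha => ?_
    exact finsum_mem_image (fun x _ y _ h => sigma_mk_injective h)
  · intro a _ a' _ hne
    refine Set.disjoint_left.2 ?_
    rintro ⟨c, d⟩ ⟨x, _, hx⟩ ⟨y, _, hy⟩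
    exact hne ((Sigma.mk.inj_iff.mp hx).1.trans (Sigma.mk.inj_iff.mp hy).1.symm)

/-- Sum over a set of pairs, grouped by the first component. -/
theorem finsum_mem_pair_set {α β M : Type*} [AddCommMonoid M]
    (A : Set α) (B : α → Set β) (hA : A.Finite) (hB : ∀ a ∈ A, (B a).Finite)
    (F : α × β → M) :
    ∑ᶠ q ∈ {q : α × β | q.1 ∈ A ∧ q.2 ∈ B q.1}, F q
      = ∑ᶠ a ∈ A, ∑ᶠ b ∈ B a, F (a, b) := by
  have hset : {q : α × β | q.1 ∈ A ∧ q.2 ∈ B q.1} = ⋃ a ∈ A, Prod.mk a '' B a := by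
    ext ⟨a, b⟩
    simp only [Set.mem_setOf_eq, Set.mem_iUnion, Set.mem_image]
    constructor
    · rintro ⟨h1, h2⟩; exact ⟨a, h1, b, h2, rfl⟩
    · rintro ⟨a', h1, b', h2, h3⟩
      obtain ⟨rfl, rfl⟩ := Prod.mk.inj h3
      exact ⟨h1, h2⟩
  rw [hset, finsum_mem_biUnion ?_ hA (fun a ha => (hB a ha).image _)]
  · refine finsum_mem_congr rfl fun a ha => ?_
    exact finsum_mem_image (fun x _ y _ h => (Prod.mk.inj h).2)
  · intro a _ a' _ hne
    refine Set.disjoint_left.2 ?_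
    rintro ⟨c, d⟩ ⟨x, _, hx⟩ ⟨y, _, hy⟩
    exact hne ((Prod.mk.inj hx).1.trans (Prod.mk.inj hy).1.symm)

theorem finsum_pair_set_finite {α β : Type*}
    (A : Set α) (B : α → Set β) (hA : A.Finite) (hB : ∀ a ∈ A, (B a).Finite) :
    {q : α × β | q.1 ∈ A ∧ q.2 ∈ B q.1}.Finite := by
  refine Set.Finite.subset (Set.Finite.biUnion hA (fun a ha => (hB a ha).image (Prod.mk a))) ?_
  rintro ⟨a, b⟩ ⟨h1, h2⟩
  exact Set.mem_biUnion h1 ⟨b, h2, rfl⟩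

theorem finsum_sigma_set_finite {ι : Type*} {β : ι → Type*}
    (A : Set ι) (B : ∀ i, Set (β i)) (hA : A.Finite) (hB : ∀ a ∈ A, (B a).Finite) :
    {q : Σ i, β i | q.1 ∈ A ∧ q.2 ∈ B q.1}.Finite := by
  refine Set.Finite.subset (Set.Finite.biUnion hA (fun a ha => (hB a ha).image (Sigma.mk a))) ?_
  rintro ⟨a, b⟩ ⟨h1, h2⟩
  exact Set.mem_biUnion h1 ⟨b, h2, rfl⟩

/-- The fiber of `ZMod.castHom : ZMod N → ZMod M` over `j` has the same (constant) finsum as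
`ZMod (N / M)`. -/
theorem zmod_fiber_sum {M N : ℕ} (hM : 0 < M) (hN : 0 < N) (hd : M ∣ N) (j : ZMod M)
    {A : Type*} [AddCommMonoid A] (c : A) :
    ∑ᶠ i ∈ {i : ZMod N | ZMod.castHom hd (ZMod M) i = j}, c
      = ∑ᶠ _t ∈ (Set.univ : Set (ZMod (N / M))), c := by
  haveI : NeZero M := ⟨hM.ne'⟩
  haveI : NeZero N := ⟨hN.ne'⟩
  have hq : 0 < N / M := Nat.div_pos (Nat.le_of_dvd hN hd) hM
  haveI : NeZero (N / M) := ⟨hq.ne'⟩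
  have hNM : M * (N / M) = N := Nat.mul_div_cancel' hd
  have bij1 : Set.BijOn (fun a : ℕ => ((j.val + M * a : ℕ) : ZMod N)) (Set.Iio (N / M))
      {i : ZMod N | ZMod.castHom hd (ZMod M) i = j} := by
    refine ⟨fun a _ => ?_, fun a ha b hb hab => ?_, fun i hi => ?_⟩
    · show ZMod.castHom hd (ZMod M) _ = j
      rw [map_natCast]
      push_cast
      rw [ZMod.natCast_self, ZMod.natCast_rightInverse j]
      ring
    · have hva : j.val + M * a < N := by
        calc j.val + M * a < M + M * a := by
              have := ZMod.val_lt j; omega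
        _ = M * (a + 1) := by ring
        _ ≤ M * (N / M) := Nat.mul_le_mul_left M (Nat.succ_le_of_lt ha)
        _ = N := hNM
      have hvb : j.val + M * b < N := by
        calc j.val + M * b < M + M * b := by
              have := ZMod.val_lt j; omega
        _ = M * (b + 1) := by ring
        _ ≤ M * (N / M) := Nat.mul_le_mul_left M (Nat.succ_le_of_lt hb)
        _ = N := hNM
      have := congrArg ZMod.val hab
      rw [ZMod.val_natCast_of_lt hva, ZMod.val_natCast_of_lt hvb] at this
      have := Nat.add_left_cancel this
      exact Nat.eq_of_mul_eq_mul_left hM this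
    · have hmod : i.val % M = j.val := by
        have h1 : ((i.val : ℕ) : ZMod M) = j := by
          rw [ZMod.natCast_val i, ← ZMod.castHom_apply (h := hd)]
          exact hi
        have := congrArg ZMod.val h1
        rwa [ZMod.val_natCast] at this
      have hdecomp : i.val = j.val + M * (i.val / M) := by
        conv_lhs => rw [← Nat.div_add_mod i.val M]
        omega
      refine ⟨i.val / M, ?_, ?_⟩
      · exact Nat.div_lt_div_of_lt_of_dvd (hNM ▸ hd) (ZMod.val_lt i)
      · show ((j.val + M * (i.val / M) : ℕ) : ZMod N) = i
        rw [← hdecomp, ZMod.natCast_rightInverse i]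
  have bij2 : Set.BijOn (fun a : ℕ => (a : ZMod (N / M))) (Set.Iio (N / M))
      (Set.univ : Set (ZMod (N / M))) := by
    refine ⟨fun a _ => trivial, fun a ha b hb hab => ?_, fun t _ => ?_⟩
    · have := congrArg ZMod.val hab
      rwa [ZMod.val_natCast_of_lt ha, ZMod.val_natCast_of_lt hb] at this
    · exact ⟨t.val, ZMod.val_lt t, ZMod.natCast_rightInverse t⟩
  rw [← finsum_mem_eq_of_bijOn _ bij1 (fun _ _ => rfl),
    ← finsum_mem_eq_of_bijOn _ bij2 (fun _ _ => rfl)]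

theorem zmod_fiber_finite {M N : ℕ} (hN : 0 < N) (hd : M ∣ N) (j : ZMod M) :
    {i : ZMod N | ZMod.castHom hd (ZMod M) i = j}.Finite := by
  haveI : NeZero N := ⟨hN.ne'⟩
  exact Set.toFinite _

end AuxGeneric
namespace KGraph

variable {k : ℕ}

/-- `vΛ^n` as a set. -/
def Sset (Λ : KGraph k) (v : Λ.M) (n : Fin k → ℕ) : Set Λ.M :=
  {x | Λ.rng x = v ∧ Λ.deg x = n}

theorem deg_zero_vertex_s12 (Λ : KGraph k) (x : Λ.M) (hx : Λ.deg x = 0) :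
    Λ.rng x = x ∧ Λ.src x = x := by
  obtain ⟨p, hp, hu⟩ := Λ.factor x 0 0 (by simpa using hx)
  have h1 : ((Λ.rng x, x) : Λ.M × Λ.M) = p :=
    hu _ ⟨by rw [Λ.src_rng], by rw [Λ.id_comp], by rw [Λ.deg_rng], hx⟩
  have h2 : ((x, Λ.src x) : Λ.M × Λ.M) = p :=
    hu _ ⟨by rw [Λ.rng_src], by rw [Λ.comp_id], hx, by rw [Λ.deg_src]⟩
  have h12 := h1.trans h2.symm
  exact ⟨(Prod.mk.inj h12).1, ((Prod.mk.inj h12).2).symm⟩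

theorem vertex_of_isVertex_deg (Λ : KGraph k) (v : Λ.M) (hv : Λ.IsVertex v) : Λ.deg v = 0 := by
  conv_lhs => rw [show v = Λ.rng v from hv.symm]
  exact Λ.deg_rng v

theorem src_of_isVertex (Λ : KGraph k) (v : Λ.M) (hv : Λ.IsVertex v) : Λ.src v = v := by
  conv_lhs => rw [show v = Λ.rng v from hv.symm]
  rw [Λ.src_rng, hv]

theorem Sset_split (Λ : KGraph k) (v : Λ.M) (m m' : Fin k → ℕ) :
    Set.BijOn (fun p : Λ.M × Λ.M => Λ.comp p.1 p.2)
      {p : Λ.M × Λ.M | p.1 ∈ Λ.Sset v m ∧ p.2 ∈ Λ.Sset (Λ.src p.1) m'}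
      (Λ.Sset v (m + m')) := by
  constructor
  · rintro ⟨p, q⟩ ⟨⟨hrp, hdp⟩, hrq, hdq⟩
    have hcomp : Λ.src p = Λ.rng q := hrq.symm
    exact ⟨by rw [Λ.rng_comp _ _ hcomp, hrp], by rw [Λ.deg_comp _ _ hcomp, hdp, hdq]⟩
  constructor
  · rintro ⟨p, q⟩ ⟨⟨hrp, hdp⟩, hrq, hdq⟩ ⟨p', q'⟩ ⟨⟨hrp', hdp'⟩, hrq', hdq'⟩ heq
    simp only at heq
    have hx : Λ.deg (Λ.comp p q) = m + m' := by
      rw [Λ.deg_comp _ _ hrq.symm, hdp, hdq]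
    obtain ⟨r, _, hu⟩ := Λ.factor (Λ.comp p q) m m' hx
    have h1 : ((p, q) : Λ.M × Λ.M) = r := hu _ ⟨hrq.symm, rfl, hdp, hdq⟩
    have h2 : ((p', q') : Λ.M × Λ.M) = r := hu _ ⟨hrq'.symm, heq.symm, hdp', hdq'⟩
    exact h1.trans h2.symm
  · rintro x ⟨hrx, hdx⟩
    obtain ⟨⟨p, q⟩, ⟨hc, he, hdp, hdq⟩, _⟩ := Λ.factor x m m' hdx
    refine ⟨(p, q), ⟨⟨?_, hdp⟩, ⟨hc.symm, hdq⟩⟩, he⟩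
    rw [← he] at hrx
    rw [← Λ.rng_comp _ _ hc, hrx]

theorem src_comp_mem {Λ : KGraph k} {v : Λ.M} {m m' : Fin k → ℕ}
    {p : Λ.M × Λ.M} (hp : p ∈ {p : Λ.M × Λ.M | p.1 ∈ Λ.Sset v m ∧ p.2 ∈ Λ.Sset (Λ.src p.1) m'}) :
    Λ.src (Λ.comp p.1 p.2) = Λ.src p.2 :=
  Λ.src_comp _ _ hp.2.1.symm

end KGraph
theorem prodmk_eq {α β : Type*} (x : α × β) (a : α) (b : β) (h1 : x.1 = a) (h2 : x.2 = b) :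
    x = (a, b) := by
  cases x; cases h1; cases h2; rfl

section AuxL

open KGraph

variable {E : BratteliDiagram} {w : E.V → ℕ}
  {hdvd : ∀ f : E.Edge, w (E.erng f) ∣ w (E.esrc f)}
  (L : BCSLimit E (fun v => Delta (w v))
      (fun f x => (x.1, ZMod.castHom (hdvd f) (ZMod (w (E.erng f))) x.2)))

theorem delta_vertex_fst {n : ℕ} (x : (Delta n).M) (h : (Delta n).IsVertex x) :
    x.1 = (0, 0) :=
  (congrArg Prod.fst h).symm

theorem delta_vertex_of_fst {n : ℕ} (x : (Delta n).M) (h : x.1 = (0, 0)) :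
    (Delta n).IsVertex x :=
  (prodmk_eq x (0, 0) x.2 h rfl).symm

theorem rng_ι (u : E.V) (y : (Delta (w u)).M) :
    L.Lam.rng (L.ι u y) = L.ι u ((0, 0), y.2) := by
  rw [L.ι_rng]; rfl

theorem src_ι (u : E.V) (y : (Delta (w u)).M) :
    L.Lam.src (L.ι u y)
      = L.ι u ((0, 0), y.2 + (y.1.1 : ZMod (w u)) + (y.1.2 : ZMod (w u))) := by
  rw [L.ι_src]; rfl

theorem isVertex_ι (u : E.V) (j : ZMod (w u)) : L.Lam.IsVertex (L.ι u ((0, 0), j)) :=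
  rng_ι L u ((0, 0), j)

theorem vtx_class (x : L.Lam.M) (hx : L.Lam.IsVertex x) :
    ∃ (u : E.V) (j : ZMod (w u)), x = L.ι u ((0, 0), j) := by
  have hdeg : L.Lam.deg x = 0 := L.Lam.vertex_of_isVertex_deg x hx
  obtain ⟨u, y, hy⟩ := L.ι_union x (by rw [hdeg]; rfl)
  have hd := L.ι_deg u y
  rw [hy, hdeg] at hd
  have h0 : (0 : ℕ) = y.1.1 := congrFun hd 0
  have h1 : (0 : ℕ) = y.1.2 := congrFun hd 1
  refine ⟨u, y.2, ?_⟩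
  rw [← hy]
  congr 1
  exact prodmk_eq y (0, 0) y.2 (prodmk_eq y.1 0 0 h0.symm h1.symm) rfl

/-- The level of a vertex of `Λ`. -/
noncomputable def vtxU (x : L.Lam.Vtx) : E.V := (vtx_class L x.1 x.2).choose

theorem vtxU_spec (x : L.Lam.Vtx) : ∃ j, x.1 = L.ι (vtxU L x) ((0, 0), j) :=
  (vtx_class L x.1 x.2).choose_spec

theorem vtxU_eq (x : L.Lam.Vtx) (u : E.V) (j : ZMod (w u))
    (h : x.1 = L.ι u ((0, 0), j)) : vtxU L x = u := by
  obtain ⟨j', hj'⟩ := vtxU_spec L x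
  exact L.ι_disjoint _ _ _ _ (hj'.symm.trans h)

theorem Sset_slice (u : E.V) (j : ZMod (w u)) (m : Fin 3 → ℕ) (hm : m 2 = 0) :
    L.Lam.Sset (L.ι u ((0, 0), j)) m = {L.ι u ((m 0, m 1), j)} := by
  ext x
  simp only [Set.mem_singleton_iff]
  constructor
  · rintro ⟨hr, hd⟩
    have h2 : L.Lam.deg x (Fin.last 2) = 0 := by
      rw [show (Fin.last 2) = (2 : Fin 3) from rfl, hd, hm]
    obtain ⟨u', y, hy⟩ := L.ι_union x h2
    rw [← hy] at hr hd ⊢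
    rw [rng_ι L u' y] at hr
    have hu : u' = u := L.ι_disjoint _ _ _ _ hr
    subst hu
    have hyv := L.ι_inj u' hr
    have hj : y.2 = j := congrArg Prod.snd hyv
    rw [L.ι_deg] at hd
    have h0 : y.1.1 = m 0 := congrFun hd 0
    have h1 : y.1.2 = m 1 := congrFun hd 1
    congr 1
    exact prodmk_eq y (m 0, m 1) j (prodmk_eq y.1 (m 0) (m 1) h0 h1) hj
  · rintro rfl
    refine ⟨?_, ?_⟩
    · exact rng_ι L u _
    · refine (L.ι_deg _ _).trans ?_
      funext i
      fin_cases i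
      · rfl
      · rfl
      · exact hm.symm

theorem exists_deg (hw : ∀ v, 0 < w v) (v : L.Lam.M) (hv : L.Lam.IsVertex v) (i : Fin 3) :
    ∃ y, L.Lam.rng y = v ∧ L.Lam.deg y = Pi.single i 1 := by
  obtain ⟨u, j, hv'⟩ := vtx_class L v hv
  subst hv'
  fin_cases i
  · refine ⟨L.ι u ((1, 0), j), rng_ι L u _, ?_⟩
    refine (L.ι_deg _ _).trans ?_
    funext i'
    fin_cases i' <;> first | rfl | simp [Fin.snoc, Pi.single_apply, Delta]
  · refine ⟨L.ι u ((0, 1), j), rng_ι L u _, ?_⟩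
    refine (L.ι_deg _ _).trans ?_
    funext i'
    fin_cases i' <;> first | rfl | simp [Fin.snoc, Pi.single_apply, Delta]
  · obtain ⟨f, hf⟩ := E.rcv u
    subst hf
    haveI : NeZero (w (E.erng f)) := ⟨(hw (E.erng f)).ne'⟩
    refine ⟨L.edge ⟨f, ((0, 0), ((j.val : ℕ) : ZMod (w (E.esrc f))))⟩, ?_, ?_⟩
    · refine (L.edge_rng f ((0, 0), ((j.val : ℕ) : ZMod (w (E.esrc f))))
        (delta_vertex_of_fst _ rfl)).trans ?_
      congr 1
      refine prodmk_eq _ _ _ rfl ?_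
      show ZMod.castHom (hdvd f) _ ((j.val : ℕ) : ZMod (w (E.esrc f))) = j
      rw [map_natCast]
      exact ZMod.natCast_rightInverse j
    · rw [L.edge_deg _ (delta_vertex_of_fst _ rfl)]
      funext i'
      fin_cases i' <;> first | rfl | simp [Fin.snoc, Pi.single_apply, Delta]

theorem leSet_eq (hw : ∀ v, 0 < w v) (v : L.Lam.M) (hv : L.Lam.IsVertex v) (n : Fin 3 → ℕ) :
    L.Lam.leSet v n = L.Lam.Sset v n := by
  ext x
  constructor
  · rintro ⟨hr, hle, hcond⟩
    refine ⟨hr, ?_⟩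
    by_contra hne
    have : ∃ i, L.Lam.deg x i ≠ n i := by
      by_contra hall
      push_neg at hall
      exact hne (funext hall)
    obtain ⟨i, hi⟩ := this
    have hlt : L.Lam.deg x i < n i := lt_of_le_of_ne (hle i) hi
    have hsum : L.Lam.deg x + Pi.single i 1 ≤ n := by
      intro i'
      by_cases h' : i' = i
      · subst h'
        simp only [Pi.add_apply, Pi.single_eq_same]
        omega
      · simp only [Pi.add_apply, Pi.single_apply, h', if_false]
        simpa using hle i'
    exact hcond i hsum (exists_deg L hw (L.Lam.src x) (L.Lam.isVertex_src x) i)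
  · rintro ⟨hr, hd⟩
    refine ⟨hr, le_of_eq hd, fun i hi => ?_⟩
    exfalso
    have := hi i
    rw [hd] at this
    simp only [Pi.add_apply, Pi.single_eq_same] at this
    omega

end AuxL
section AuxE3

open KGraph

variable {E : BratteliDiagram} {w : E.V → ℕ}
  {hdvd : ∀ f : E.Edge, w (E.erng f) ∣ w (E.esrc f)}
  (L : BCSLimit E (fun v => Delta (w v))
      (fun f x => (x.1, ZMod.castHom (hdvd f) (ZMod (w (E.erng f))) x.2)))

theorem e3_eq_snoc : (Pi.single (2 : Fin 3) 1 : Fin 3 → ℕ) = Fin.snoc (fun _ : Fin 2 => 0) 1 := by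
  funext i
  fin_cases i <;> first | rfl | simp [Fin.snoc, Pi.single_apply]

theorem F0_finite (hsc : E.SinglyConnected) (u : E.V) : {f : E.Edge | E.erng f = u}.Finite := by
  have himg : E.esrc '' {f : E.Edge | E.erng f = u} ⊆ {v | E.level v = E.level u + 1} := by
    rintro v ⟨f, hf, rfl⟩
    rw [Set.mem_setOf_eq, E.level_src f, hf]
  refine Set.Finite.of_finite_image (Set.Finite.subset (E.level_finite _) himg) ?_
  intro f hf f' hf' hsrc
  exact hsc f f' (hf.trans hf'.symm) hsrc

/-- The fiber of the `e₃`-edges over an underlying edge `f`. -/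
def Fib (v : L.Lam.M) (f : E.Edge) : Set ((Delta (w (E.esrc f))).M) :=
  {x | (Delta (w (E.esrc f))).IsVertex x ∧
    L.ι (E.erng f) (x.1, ZMod.castHom (hdvd f) (ZMod (w (E.erng f))) x.2) = v}

theorem Fib_finite (hw : ∀ v, 0 < w v) (v : L.Lam.M) (f : E.Edge) : (Fib L v f).Finite := by
  haveI : NeZero (w (E.esrc f)) := ⟨(hw (E.esrc f)).ne'⟩
  refine Set.Finite.subset
    (Set.finite_range (fun i : ZMod (w (E.esrc f)) => (((0, 0) : ℕ × ℕ), i))) ?_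
  rintro x ⟨hv, _⟩
  exact ⟨x.2, (prodmk_eq x _ _ (delta_vertex_fst x hv) rfl).symm⟩

theorem e3_bij (u : E.V) (j : ZMod (w u)) :
    Set.BijOn (fun q => L.edge q)
      {q : Σ f : E.Edge, (Delta (w (E.esrc f))).M |
        q.1 ∈ {f : E.Edge | E.erng f = u} ∧ q.2 ∈ Fib L (L.ι u ((0, 0), j)) q.1}
      (L.Lam.Sset (L.ι u ((0, 0), j)) (Pi.single 2 1)) := by
  constructor
  · rintro ⟨f, x⟩ ⟨hf, hv, hι⟩
    refine ⟨?_, ?_⟩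
    · rw [L.edge_rng f x hv]
      exact hι
    · rw [L.edge_deg _ hv]
      exact e3_eq_snoc.symm
  constructor
  · rintro q ⟨_, hv, _⟩ q' ⟨_, hv', _⟩ heq
    exact L.edge_injOn hv hv' heq
  · rintro x ⟨hr, hd⟩
    obtain ⟨⟨f, y⟩, hqv, hqe⟩ := L.edge_surj x (by rw [hd, e3_eq_snoc])
    rw [← hqe] at hr
    rw [L.edge_rng f y hqv] at hr
    exact ⟨⟨f, y⟩, ⟨L.ι_disjoint _ _ _ _ hr, hqv, hr⟩, hqe⟩

theorem Sset_e3_finite (hsc : E.SinglyConnected) (hw : ∀ v, 0 < w v) (u : E.V)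
    (j : ZMod (w u)) : (L.Lam.Sset (L.ι u ((0, 0), j)) (Pi.single 2 1)).Finite := by
  have hT := finsum_sigma_set_finite _ _ (F0_finite hsc u)
    (fun f _ => Fib_finite L hw (L.ι u ((0, 0), j)) f)
  have := hT.image (fun q => L.edge q)
  rwa [(e3_bij L u j).image_eq] at this

theorem per_f (hw : ∀ v, 0 < w v) (f : E.Edge) (u : E.V) (hf : E.erng f = u)
    (j : ZMod (w u)) (c : ℝ≥0) :
    ∑ᶠ x ∈ Fib L (L.ι u ((0, 0), j)) f, c
      = ∑ᶠ _t ∈ (Set.univ : Set (ZMod (w (E.esrc f) / w (E.erng f)))), c := by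
  subst hf
  have hbij : Set.BijOn (fun i : ZMod (w (E.esrc f)) => ((((0, 0)) : ℕ × ℕ), i))
      {i : ZMod (w (E.esrc f)) | ZMod.castHom (hdvd f) (ZMod (w (E.erng f))) i = j}
      (Fib L (L.ι (E.erng f) ((0, 0), j)) f) := by
    constructor
    · intro i hi
      refine ⟨delta_vertex_of_fst _ rfl, ?_⟩
      congr 1
      exact prodmk_eq _ _ _ rfl hi
    constructor
    · intro a _ b _ hab
      exact congrArg Prod.snd hab
    · rintro x ⟨hv, hι⟩
      have h2 := L.ι_inj _ hι
      exact ⟨x.2, congrArg Prod.snd h2, (prodmk_eq x _ _ (delta_vertex_fst x hv) rfl).symm⟩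
  exact (finsum_mem_eq_of_bijOn _ hbij (fun _ _ => rfl)).symm.trans
    (zmod_fiber_sum (hw _) (hw _) (hdvd f) j c)

theorem e3sum (hsc : E.SinglyConnected) (hw : ∀ v, 0 < w v) (h : E.V → ℝ≥0)
    (u : E.V) (j : ZMod (w u)) :
    ∑ᶠ x ∈ L.Lam.Sset (L.ι u ((0, 0), j)) (Pi.single 2 1), h (vtxU L (L.Lam.srcV x))
      = ∑ᶠ e ∈ {e : (Fdiag E w).Edge | (Fdiag E w).erng e = u}, h ((Fdiag E w).esrc e) := by
  have hval : ∀ q ∈ {q : Σ f : E.Edge, (Delta (w (E.esrc f))).M |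
        q.1 ∈ {f : E.Edge | E.erng f = u} ∧ q.2 ∈ Fib L (L.ι u ((0, 0), j)) q.1},
      (fun q : Σ f : E.Edge, (Delta (w (E.esrc f))).M => h (E.esrc q.1)) q
        = h (vtxU L (L.Lam.srcV (L.edge q))) := by
    rintro ⟨f, x⟩ ⟨hf, hv, hι⟩
    have hU : vtxU L (L.Lam.srcV (L.edge ⟨f, x⟩)) = E.esrc f := by
      apply vtxU_eq L _ (E.esrc f) x.2
      show L.Lam.src (L.edge ⟨f, x⟩) = _
      rw [L.edge_src f x hv]
      congr 1
      exact prodmk_eq x _ _ (delta_vertex_fst x hv) rfl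
    rw [hU]
  haveI : ∀ f : E.Edge, NeZero (w (E.esrc f) / w (E.erng f)) := fun f =>
    ⟨(Nat.div_pos (Nat.le_of_dvd (hw _) (hdvd f)) (hw _)).ne'⟩
  have hR : {e : (Fdiag E w).Edge | (Fdiag E w).erng e = u}
      = {q : Σ f : E.Edge, ZMod (w (E.esrc f) / w (E.erng f)) |
          q.1 ∈ {f : E.Edge | E.erng f = u} ∧ q.2 ∈ Set.univ} := by
    ext ⟨f, t⟩
    simp [Fdiag]
  calc ∑ᶠ x ∈ L.Lam.Sset (L.ι u ((0, 0), j)) (Pi.single 2 1), h (vtxU L (L.Lam.srcV x))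
      = ∑ᶠ q ∈ {q : Σ f : E.Edge, (Delta (w (E.esrc f))).M |
          q.1 ∈ {f : E.Edge | E.erng f = u} ∧ q.2 ∈ Fib L (L.ι u ((0, 0), j)) q.1},
          h (E.esrc q.1) := (finsum_mem_eq_of_bijOn _ (e3_bij L u j) hval).symm
    _ = ∑ᶠ f ∈ {f : E.Edge | E.erng f = u}, ∑ᶠ x ∈ Fib L (L.ι u ((0, 0), j)) f,
          h (E.esrc f) :=
        finsum_mem_sigma_set _ _ (F0_finite hsc u)
          (fun f _ => Fib_finite L hw (L.ι u ((0, 0), j)) f) _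
    _ = ∑ᶠ f ∈ {f : E.Edge | E.erng f = u},
          ∑ᶠ _t ∈ (Set.univ : Set (ZMod (w (E.esrc f) / w (E.erng f)))), h (E.esrc f) :=
        finsum_mem_congr rfl fun f hf => per_f L hw f u hf j (h (E.esrc f))
    _ = ∑ᶠ q ∈ {q : Σ f : E.Edge, ZMod (w (E.esrc f) / w (E.erng f)) |
          q.1 ∈ {f : E.Edge | E.erng f = u} ∧ q.2 ∈ Set.univ}, h (E.esrc q.1) :=
        (finsum_mem_sigma_set _ _ (F0_finite hsc u) (fun f _ => Set.finite_univ)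
          (fun q => h (E.esrc q.1))).symm
    _ = ∑ᶠ e ∈ {e : (Fdiag E w).Edge | (Fdiag E w).erng e = u}, h ((Fdiag E w).esrc e) :=
        (finsum_mem_congr hR (fun _ _ => rfl)).symm

end AuxE3
section AuxIter

open KGraph

variable {E : BratteliDiagram} {w : E.V → ℕ}
  {hdvd : ∀ f : E.Edge, w (E.erng f) ∣ w (E.esrc f)}
  (L : BCSLimit E (fun v => Delta (w v))
      (fun f x => (x.1, ZMod.castHom (hdvd f) (ZMod (w (E.erng f))) x.2)))

theorem single_two_succ (c : ℕ) :
    (Pi.single (2 : Fin 3) (c + 1) : Fin 3 → ℕ) = Pi.single 2 1 + Pi.single 2 c := by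
  have h1 : c + 1 = 1 + c := Nat.add_comm c 1
  rw [h1, ← Pi.single_add]

theorem I1_bij (u : E.V) (j : ZMod (w u)) (n : Fin 3 → ℕ) :
    Set.BijOn (fun q => L.Lam.comp (L.ι u ((n 0, n 1), j)) q)
      (L.Lam.Sset (L.ι u ((0, 0), j + (n 0 : ZMod (w u)) + (n 1 : ZMod (w u))))
        (Pi.single 2 (n 2)))
      (L.Lam.Sset (L.ι u ((0, 0), j)) n) := by
  set p₀ := L.ι u ((n 0, n 1), j) with hp₀
  set v' := L.ι u ((0, 0), j + (n 0 : ZMod (w u)) + (n 1 : ZMod (w u))) with hv'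
  set m : Fin 3 → ℕ := fun i => if i = 2 then 0 else n i with hm
  have hm2 : m 2 = 0 := by simp [hm]
  have hdp : L.Lam.deg p₀ = m := by
    refine (L.ι_deg _ _).trans ?_
    funext i
    fin_cases i <;>
      first
      | rfl
      | (simp [hm, Fin.snoc, Delta, Matrix.cons_val_zero, Matrix.cons_val_one, Matrix.head_cons];
          try rfl)
  have hsp : L.Lam.src p₀ = v' := src_ι L u _
  have hrp : L.Lam.rng p₀ = L.ι u ((0, 0), j) := rng_ι L u _
  have hmn : m + Pi.single 2 (n 2) = n := by
    funext i
    fin_cases i <;> simp [hm, Pi.single_apply]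
  constructor
  · rintro q ⟨hrq, hdq⟩
    have hc : L.Lam.src p₀ = L.Lam.rng q := hsp.trans hrq.symm
    refine ⟨?_, ?_⟩
    · rw [L.Lam.rng_comp _ _ hc, hrp]
    · rw [L.Lam.deg_comp _ _ hc, hdp, hdq, hmn]
  constructor
  · rintro q ⟨hrq, hdq⟩ q' ⟨hrq', hdq'⟩ heq
    simp only at heq
    have hc : L.Lam.src p₀ = L.Lam.rng q := hsp.trans hrq.symm
    have hc' : L.Lam.src p₀ = L.Lam.rng q' := hsp.trans hrq'.symm
    have hx : L.Lam.deg (L.Lam.comp p₀ q) = m + Pi.single 2 (n 2) := by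
      rw [L.Lam.deg_comp _ _ hc, hdp, hdq]
    obtain ⟨r, _, hu⟩ := L.Lam.factor (L.Lam.comp p₀ q) m (Pi.single 2 (n 2)) hx
    have h1 : ((p₀, q) : L.Lam.M × L.Lam.M) = r := hu _ ⟨hc, rfl, hdp, hdq⟩
    have h2 : ((p₀, q') : L.Lam.M × L.Lam.M) = r := hu _ ⟨hc', heq.symm, hdp, hdq'⟩
    exact congrArg Prod.snd (h1.trans h2.symm)
  · rintro x ⟨hrx, hdx⟩
    obtain ⟨⟨p, q⟩, ⟨hc, he, hdp', hdq'⟩, _⟩ :=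
      L.Lam.factor x m (Pi.single 2 (n 2)) (hdx.trans hmn.symm)
    have hrp' : L.Lam.rng p = L.ι u ((0, 0), j) := by
      rw [← he] at hrx
      rw [← L.Lam.rng_comp _ _ hc, hrx]
    have hpm : p ∈ L.Lam.Sset (L.ι u ((0, 0), j)) m := ⟨hrp', hdp'⟩
    rw [Sset_slice L u j m hm2, Set.mem_singleton_iff] at hpm
    have hpp : p = p₀ := by
      have hm0 : m 0 = n 0 := rfl
      have hm1 : m 1 = n 1 := rfl
      rw [hpm, hm0, hm1]
    refine ⟨q, ⟨?_, hdq'⟩, ?_⟩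
    · rw [← hc, hpp, hsp]
    · show L.Lam.comp p₀ q = x
      rw [← hpp]
      exact he

theorem Sset_e3_finite' (hsc : E.SinglyConnected) (hw : ∀ v, 0 < w v) (v : L.Lam.Vtx) :
    (L.Lam.Sset v.1 (Pi.single 2 1)).Finite := by
  obtain ⟨u, j, hv⟩ := vtx_class L v.1 v.2
  rw [hv]
  exact Sset_e3_finite L hsc hw u j

theorem Sset_d3_finite (hsc : E.SinglyConnected) (hw : ∀ v, 0 < w v) :
    ∀ (c : ℕ) (v : L.Lam.M), L.Lam.IsVertex v →
      (L.Lam.Sset v (Pi.single 2 c)).Finite := by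
  intro c
  induction c with
  | zero =>
    intro v hv
    obtain ⟨u, j, rfl⟩ := vtx_class L v hv
    rw [Sset_slice L u j _ (by simp)]
    exact Set.finite_singleton _
  | succ c ih =>
    intro v hv
    obtain ⟨u, j, rfl⟩ := vtx_class L v hv
    have hsplit := L.Lam.Sset_split (L.ι u ((0, 0), j)) (Pi.single 2 1) (Pi.single 2 c)
    have hP := finsum_pair_set_finite (L.Lam.Sset (L.ι u ((0, 0), j)) (Pi.single 2 1))
      (fun a => L.Lam.Sset (L.Lam.src a) (Pi.single 2 c))
      (Sset_e3_finite L hsc hw u j)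
      (fun a _ => ih (L.Lam.src a) (L.Lam.isVertex_src a))
    have himg := hP.image (fun p : L.Lam.M × L.Lam.M => L.Lam.comp p.1 p.2)
    rw [hsplit.image_eq] at himg
    rwa [single_two_succ]

theorem iter_sum (hsc : E.SinglyConnected) (hw : ∀ v, 0 < w v) (g : L.Lam.Vtx → ℝ≥0)
    (hg : ∀ v : L.Lam.Vtx,
      ∑ᶠ x ∈ L.Lam.Sset v.1 (Pi.single 2 1), g (L.Lam.srcV x) = g v) :
    ∀ (c : ℕ) (v : L.Lam.Vtx),
      ∑ᶠ x ∈ L.Lam.Sset v.1 (Pi.single 2 c), g (L.Lam.srcV x) = g v := by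
  intro c
  induction c with
  | zero =>
    intro v
    obtain ⟨u, j, hv⟩ := vtx_class L v.1 v.2
    rw [hv, Sset_slice L u j _ (by simp), finsum_mem_singleton]
    have hsrc : L.Lam.srcV (L.ι u (((Pi.single (2:Fin 3) 0 : Fin 3 → ℕ) 0,
        (Pi.single (2:Fin 3) 0 : Fin 3 → ℕ) 1), j)) = v := by
      apply Subtype.ext
      show L.Lam.src _ = v.1
      refine (src_ι L _ _).trans ?_
      rw [hv]
      congr 1
      refine prodmk_eq _ _ _ rfl ?_
      show j + (((Pi.single (2:Fin 3) 0 : Fin 3 → ℕ) 0 : ℕ) : ZMod (w u))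
          + (((Pi.single (2:Fin 3) 0 : Fin 3 → ℕ) 1 : ℕ) : ZMod (w u)) = j
      simp
    rw [hsrc]
  | succ c ih =>
    intro v
    rw [single_two_succ]
    have hsplit := L.Lam.Sset_split v.1 (Pi.single 2 1) (Pi.single 2 c)
    have hval : ∀ p ∈ {p : L.Lam.M × L.Lam.M |
        p.1 ∈ L.Lam.Sset v.1 (Pi.single 2 1)
          ∧ p.2 ∈ L.Lam.Sset (L.Lam.src p.1) (Pi.single 2 c)},
        (fun p : L.Lam.M × L.Lam.M => g (L.Lam.srcV p.2)) p
          = g (L.Lam.srcV (L.Lam.comp p.1 p.2)) := by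
      intro p hp
      exact congrArg g (Subtype.ext (KGraph.src_comp_mem hp).symm)
    rw [← finsum_mem_eq_of_bijOn _ hsplit hval]
    rw [finsum_mem_pair_set _ _ (Sset_e3_finite' L hsc hw v)
      (fun a ha => Sset_d3_finite L hsc hw c (L.Lam.src a) (L.Lam.isVertex_src a))
      (fun p : L.Lam.M × L.Lam.M => g (L.Lam.srcV p.2))]
    have hinner : ∀ a ∈ L.Lam.Sset v.1 (Pi.single 2 1),
        (∑ᶠ b ∈ L.Lam.Sset (L.Lam.src a) (Pi.single 2 c), g (L.Lam.srcV b))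
          = g (L.Lam.srcV a) :=
      fun a _ => ih (L.Lam.srcV a)
    rw [finsum_mem_congr rfl hinner]
    exact hg v

end AuxIter
section AuxFinal

open KGraph

variable {E : BratteliDiagram} {w : E.V → ℕ}
  {hdvd : ∀ f : E.Edge, w (E.erng f) ∣ w (E.esrc f)}
  (L : BCSLimit E (fun v => Delta (w v))
      (fun f x => (x.1, ZMod.castHom (hdvd f) (ZMod (w (E.erng f))) x.2)))

theorem trace_construct (hsc : E.SinglyConnected) (hw : ∀ v, 0 < w v)
    (g : L.Lam.Vtx → ℝ≥0)
    (hconst : ∀ (u : E.V) (j j' : ZMod (w u)) (x y : L.Lam.Vtx),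
      x.1 = L.ι u ((0, 0), j) → y.1 = L.ι u ((0, 0), j') → g x = g y)
    (hg : ∀ v : L.Lam.Vtx,
      ∑ᶠ x ∈ L.Lam.Sset v.1 (Pi.single 2 1), g (L.Lam.srcV x) = g v) :
    L.Lam.IsGraphTrace g := by
  intro v n
  rw [leSet_eq L hw v.1 v.2 n]
  obtain ⟨u, j, hv⟩ := vtx_class L v.1 v.2
  have hval : ∀ q ∈ L.Lam.Sset
      (L.ι u ((0, 0), j + (n 0 : ZMod (w u)) + (n 1 : ZMod (w u)))) (Pi.single 2 (n 2)),
      (fun q => g (L.Lam.srcV q)) q = g (L.Lam.srcV (L.Lam.comp (L.ι u ((n 0, n 1), j)) q)) := by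
    rintro q ⟨hrq, _⟩
    have hc : L.Lam.src (L.ι u ((n 0, n 1), j)) = L.Lam.rng q := by
      refine (src_ι L _ _).trans ?_
      rw [hrq]
    exact congrArg g (Subtype.ext (L.Lam.src_comp _ _ hc).symm)
  rw [hv, ← finsum_mem_eq_of_bijOn _ (I1_bij L u j n) hval]
  rw [iter_sum L hsc hw g hg (n 2)
    ⟨L.ι u ((0, 0), j + (n 0 : ZMod (w u)) + (n 1 : ZMod (w u))), isVertex_ι L u _⟩]
  exact hconst u j (j + (n 0 : ZMod (w u)) + (n 1 : ZMod (w u))) v _ hv rfl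

theorem trace_j_step (hw : ∀ v, 0 < w v) (g : L.Lam.Vtx → ℝ≥0)
    (hgt : L.Lam.IsGraphTrace g) (u : E.V) (j : ZMod (w u)) :
    g ⟨L.ι u ((0, 0), j), isVertex_ι L u j⟩
      = g ⟨L.ι u ((0, 0), j + 1), isVertex_ι L u (j + 1)⟩ := by
  set x : L.Lam.Vtx := ⟨L.ι u ((0, 0), j), isVertex_ι L u j⟩ with hx
  have h1 := hgt x (Pi.single 0 1)
  have hsx : x.1 = L.ι u ((0, 0), j) := rfl
  rw [leSet_eq L hw x.1 x.2, hsx,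
    Sset_slice L u j _ (Pi.single_eq_of_ne (by decide) 1), finsum_mem_singleton] at h1
  rw [h1]
  apply congrArg g
  apply Subtype.ext
  show L.Lam.src _ = L.ι u ((0, 0), j + 1)
  refine (src_ι L _ _).trans ?_
  congr 2
  show j + (((Pi.single (0 : Fin 3) 1 : Fin 3 → ℕ) 0 : ℕ) : ZMod (w u))
      + (((Pi.single (0 : Fin 3) 1 : Fin 3 → ℕ) 1 : ℕ) : ZMod (w u)) = j + 1
  rw [Pi.single_eq_same, Pi.single_eq_of_ne (by decide)]
  push_cast
  ring

theorem trace_j_indep (hw : ∀ v, 0 < w v) (g : L.Lam.Vtx → ℝ≥0)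
    (hgt : L.Lam.IsGraphTrace g) (u : E.V) (j j' : ZMod (w u)) (x y : L.Lam.Vtx)
    (hx : x.1 = L.ι u ((0, 0), j)) (hy : y.1 = L.ι u ((0, 0), j')) : g x = g y := by
  set G : ZMod (w u) → ℝ≥0 := fun i => g ⟨L.ι u ((0, 0), i), isVertex_ι L u i⟩ with hG
  have hstep : ∀ i, G i = G (i + 1) := fun i => trace_j_step L hw g hgt u i
  have hnat : ∀ m : ℕ, G ((m : ℕ) : ZMod (w u)) = G 0 := by
    intro m
    induction m with
    | zero => norm_num
    | succ m ih =>
      have hc : (((m + 1 : ℕ)) : ZMod (w u)) = ((m : ℕ) : ZMod (w u)) + 1 := by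
        push_cast; ring
      rw [hc, ← hstep ((m : ℕ) : ZMod (w u))]
      exact ih
  haveI : NeZero (w u) := ⟨(hw u).ne'⟩
  have hconst : ∀ i : ZMod (w u), G i = G 0 := by
    intro i
    rw [← ZMod.natCast_rightInverse i]
    exact hnat i.val
  have hgx : g x = G j := congrArg g (Subtype.ext hx)
  have hgy : g y = G j' := congrArg g (Subtype.ext hy)
  rw [hgx, hgy, hconst j, hconst j']

theorem gen_e3_of_trace_fun (hsc : E.SinglyConnected) (hw : ∀ v, 0 < w v)
    (h : E.V → ℝ≥0) (hh : (Fdiag E w).IsTrace h) (v : L.Lam.Vtx) :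
    ∑ᶠ x ∈ L.Lam.Sset v.1 (Pi.single 2 1),
      (fun x : L.Lam.Vtx => h (vtxU L x)) (L.Lam.srcV x)
      = (fun x : L.Lam.Vtx => h (vtxU L x)) v := by
  obtain ⟨j, hv⟩ := vtxU_spec L v
  rw [hv, e3sum L hsc hw h (vtxU L v) j]
  exact (hh (show E.V from vtxU L v)).symm

end AuxFinal
open KGraph in
/-- For the rank-3 Bratteli diagram `Λ = Λ_E` of a singly connected
weighted Bratteli diagram `(E, w)`, graph traces on the Bratteli diagram `F` are in
bijection `h ↦ g_h` with graph traces on `Λ`, where `g_h(ι_v(v,j)) = h v`. -/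
theorem rank3_traces_biject_with_F_traces
    (E : BratteliDiagram) (hsc : E.SinglyConnected)
    (w : E.V → ℕ) (hw : ∀ v, 0 < w v)
    (hdvd : ∀ f : E.Edge, w (E.erng f) ∣ w (E.esrc f))
    (L : BCSLimit E (fun v => Delta (w v))
      (fun f x => (x.1, ZMod.castHom (hdvd f) (ZMod (w (E.erng f))) x.2))) :
    ∃ Φ : {h : E.V → ℝ≥0 // (Fdiag E w).IsTrace h} →
        {g : L.Lam.Vtx → ℝ≥0 // L.Lam.IsGraphTrace g},
      Function.Bijective Φ ∧
      ∀ (h : {h : E.V → ℝ≥0 // (Fdiag E w).IsTrace h}) (v : E.V) (j : ZMod (w v))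
        (x : L.Lam.Vtx), x.1 = L.ι v ((0, 0), j) → (Φ h).1 x = h.1 v := by
  classical
  refine ⟨fun h => ⟨fun x => h.1 (vtxU L x), ?_⟩, ⟨?_, ?_⟩, ?_⟩
  · exact trace_construct L hsc hw _
      (fun u j j' x y hx hy => by
        rw [vtxU_eq L x u j hx, vtxU_eq L y u j' hy])
      (fun v => gen_e3_of_trace_fun L hsc hw h.1 h.2 v)
  · intro h h' heq
    apply Subtype.ext
    funext u
    have h1 := congrArg
      (fun F : {g : L.Lam.Vtx → ℝ≥0 // L.Lam.IsGraphTrace g} =>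
        F.1 ⟨L.ι u ((0, 0), (0 : ZMod (w u))), isVertex_ι L u 0⟩) heq
    simp only at h1
    rwa [vtxU_eq L ⟨L.ι u ((0, 0), (0 : ZMod (w u))), isVertex_ι L u 0⟩ u 0 rfl] at h1
  · intro g
    set h : E.V → ℝ≥0 :=
      fun u => g.1 ⟨L.ι u ((0, 0), (0 : ZMod (w u))), isVertex_ι L u 0⟩ with hh
    have hgh : ∀ x : L.Lam.Vtx, g.1 x = h (vtxU L x) := by
      intro x
      obtain ⟨j, hv⟩ := vtxU_spec L x
      exact trace_j_indep L hw g.1 g.2 (vtxU L x) j 0 x _ hv rfl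
    have htrace : (Fdiag E w).IsTrace h := by
      intro u
      have t1 := g.2 ⟨L.ι u ((0, 0), (0 : ZMod (w u))), isVertex_ι L u 0⟩ (Pi.single 2 1)
      rw [leSet_eq L hw _ (isVertex_ι L u 0)] at t1
      have t2 : ∑ᶠ x ∈ L.Lam.Sset (L.ι u ((0, 0), (0 : ZMod (w u)))) (Pi.single 2 1),
          g.1 (L.Lam.srcV x)
          = ∑ᶠ x ∈ L.Lam.Sset (L.ι u ((0, 0), (0 : ZMod (w u)))) (Pi.single 2 1),
            h (vtxU L (L.Lam.srcV x)) :=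
        finsum_mem_congr rfl (fun x _ => hgh _)
      rw [t2, e3sum L hsc hw h u 0] at t1
      exact t1
    refine ⟨⟨h, htrace⟩, ?_⟩
    apply Subtype.ext
    funext x
    exact (hgh x).symm
  · intro h v j x hx
    show h.1 (vtxU L x) = h.1 v
    rw [vtxU_eq L x v j hx]
end

section
/- Let Λ be a row-finite locally convex k-graph, let c be a 𝕋-valued 2-cocycle on Λ, let s be a Cuntz–Krieger (Λ,c)-family in a C*-algebra B, and let τ be a semifinite trace on B. Then τ(s_v) < ∞ for every v ∈ Λ^0, and the function g : Λ^0 → [0,∞) defined by g(v) = τ(s_v) is a graph trace on Λ. -/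
open scoped BigOperators NNReal ENNReal

open KGraph in
private lemma graphTrace_aux {k : ℕ} (Λ : KGraph k) (hrf : Λ.RowFinite)
    {B : Type*} [NonUnitalCStarAlgebra B] [PartialOrder B] [StarOrderedRing B]
    (s : Λ.M → B)
    (hs1 : ∀ v, Λ.IsVertex v → star (s v) = s v ∧ s v * s v = s v)
    (hs4 : ∀ x, star (s x) * s x = s (Λ.src x))
    (hs5 : ∀ (v : Λ.M) (n : Fin k → ℕ), Λ.IsVertex v →
      s v = ∑ᶠ x ∈ Λ.leSet v n, s x * star (s x))
    (τ : B → ℝ≥0∞) (htau0 : τ (0 : B) = 0)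
    (hadd : ∀ a b : B, 0 ≤ a → 0 ≤ b → τ (a + b) = τ a + τ b)
    (htrace : ∀ a : B, τ (star a * a) = τ (a * star a))
    (hsemifinite : ∀ a : B, 0 ≤ a → a ∈ closure {b : B | 0 ≤ b ∧ τ b ≠ ∞}) :
    (∀ v : Λ.Vtx, τ (s v.1) ≠ ∞) ∧
      Λ.IsGraphTrace (fun v : Λ.Vtx => (τ (s v.1)).toNNReal) := by
  classical
  -- monotonicity of τ on positives
  have hmono : ∀ a b : B, 0 ≤ a → a ≤ b → τ a ≤ τ b := by
    intro a b ha hab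
    have h := hadd a (b - a) ha (by rwa [sub_nonneg])
    have h' : a + (b - a) = b := by abel
    rw [h'] at h
    rw [h]
    exact le_self_add
  -- τ of finite sums of positives
  have hsum : ∀ (F : Finset Λ.M) (f : Λ.M → B), (∀ i ∈ F, 0 ≤ f i) →
      τ (∑ i ∈ F, f i) = ∑ i ∈ F, τ (f i) := by
    intro F f
    induction F using Finset.cons_induction with
    | empty => intro _; simpa using htau0
    | cons i F hi ih =>
      intro hf
      rw [Finset.sum_cons, Finset.sum_cons,
        hadd _ _ (hf i (Finset.mem_cons_self i F))
          (Finset.sum_nonneg fun j hj => hf j (Finset.mem_cons_of_mem hj)),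
        ih (fun j hj => hf j (Finset.mem_cons_of_mem hj))]
  -- positivity of vertex projections
  have hproj : ∀ v, Λ.IsVertex v → 0 ≤ s v := by
    intro v hv
    calc (0 : B) ≤ star (s v) * s v := star_mul_self_nonneg _
    _ = s v := by rw [(hs1 v hv).1, (hs1 v hv).2]
  -- nonnegativity of real scalars in the unitization
  have halg : ∀ t : ℝ, 0 ≤ t → (0 : Unitization ℂ B) ≤ algebraMap ℝ _ t := by
    intro t ht
    have : algebraMap ℝ (Unitization ℂ B) t
        = star (algebraMap ℝ _ (Real.sqrt t)) * algebraMap ℝ _ (Real.sqrt t) := by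
      rw [← algebraMap_star_comm, star_trivial, ← map_mul, Real.mul_self_sqrt ht]
    rw [this]
    exact star_mul_self_nonneg _
  -- finiteness of τ on vertex projections
  have hτfin : ∀ v, Λ.IsVertex v → τ (s v) ≠ ∞ := by
    intro v hv
    set p := s v with hp
    have hpsa : IsSelfAdjoint p := (hs1 v hv).1
    have hpp : p * p = p := (hs1 v hv).2
    have hp0 : 0 ≤ p := hproj v hv
    obtain ⟨b, hbS, hbd⟩ :=
      Metric.mem_closure_iff.mp (hsemifinite p hp0) (1/2) (by norm_num)
    obtain ⟨hb0, hbτ⟩ := hbS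
    have hbsa : IsSelfAdjoint b := .of_nonneg hb0
    set x := b - p with hxdef
    have hxsa : IsSelfAdjoint x := hbsa.sub hpsa
    have hxnorm : ‖x‖ < 1/2 := by
      have hd : dist p b = ‖x‖ := by rw [dist_eq_norm, hxdef, norm_sub_rev]
      rw [← hd]; exact hbd
    -- key positivity, via the unitization
    have hUkey : (0 : B) ≤ p + (p * x * p + p * x * p) := by
      rw [← Unitization.inr_nonneg_iff]
      set P : Unitization ℂ B := (p : Unitization ℂ B) with hPdef
      set X : Unitization ℂ B := (x : Unitization ℂ B) with hXdef2
      have hPsa : IsSelfAdjoint P := Unitization.isSelfAdjoint_inr.mpr hpsa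
      have hXsa : IsSelfAdjoint X := Unitization.isSelfAdjoint_inr.mpr hxsa
      have hPP : P * P = P := by
        rw [hPdef, ← Unitization.inr_mul, hpp]
      have hXXsa : IsSelfAdjoint (X + X) := hXsa.add hXsa
      have hu0 : (0 : Unitization ℂ B) ≤ 1 + (X + X) := by
        have h1 : -(X + X) ≤ algebraMap ℝ (Unitization ℂ B) ‖-(X + X)‖ :=
          IsSelfAdjoint.le_algebraMap_norm_self hXXsa.neg
        have hXn : ‖X‖ = ‖x‖ := Unitization.norm_inr x
        have hn : ‖-(X + X)‖ ≤ 1 := by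
          rw [norm_neg]
          calc ‖X + X‖ ≤ ‖X‖ + ‖X‖ := norm_add_le X X
          _ ≤ 1 := by rw [hXn]; linarith
        have h2 : algebraMap ℝ (Unitization ℂ B) ‖-(X + X)‖ ≤ 1 := by
          have h0 : (0 : Unitization ℂ B) ≤ algebraMap ℝ _ (1 - ‖-(X + X)‖) :=
            halg _ (by linarith)
          have e : algebraMap ℝ (Unitization ℂ B) ‖-(X + X)‖
              = 1 - algebraMap ℝ _ (1 - ‖-(X + X)‖) := by
            rw [map_sub, map_one]; abel
          rw [e]
          exact sub_le_self 1 h0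
        have h3 : -(X + X) ≤ 1 := h1.trans h2
        have h4 := add_le_add_right h3 (X + X)
        rwa [add_neg_cancel, add_comm] at h4
      set r := CFC.sqrt (1 + (X + X)) with hrdef
      have hr0 : 0 ≤ r := CFC.sqrt_nonneg _
      have hrsa : IsSelfAdjoint r := .of_nonneg hr0
      have hrr : r * r = 1 + (X + X) := CFC.sqrt_mul_sqrt_self _ hu0
      have key : (↑(p + (p * x * p + p * x * p)) : Unitization ℂ B)
          = star (r * P) * (r * P) := by
        simp only [Unitization.inr_add, Unitization.inr_mul]
        rw [← hPdef, ← hXdef2]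
        rw [star_mul, hrsa.star_eq, hPsa.star_eq]
        have e : P * r * (r * P) = P * (r * r) * P := by noncomm_ring
        rw [e, hrr]
        have e2 : P * (1 + (X + X)) * P = P * P + (P * X * P + P * X * P) := by
          noncomm_ring
        rw [e2, hPP]
      rw [key]
      exact star_mul_self_nonneg _
    have hpbp : p * b * p = p + p * x * p := by
      have hb' : b = p + x := by rw [hxdef]; abel
      have e : p * (p + x) * p = p * p * p + p * x * p := by noncomm_ring
      rw [hb', e, hpp, hpp]
    have hkey : p ≤ p * b * p + p * b * p := by
      rw [← sub_nonneg]
      have e : p * b * p + p * b * p - p = p + (p * x * p + p * x * p) := by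
        rw [hpbp]; abel
      rw [e]; exact hUkey
    set q := CFC.sqrt b with hqdef
    have hq : q * q = b := CFC.sqrt_mul_sqrt_self b hb0
    have hqsa : IsSelfAdjoint q := .of_nonneg (CFC.sqrt_nonneg _)
    have e1 : p * b * p = star (q * p) * (q * p) := by
      rw [star_mul, hqsa.star_eq, hpsa.star_eq, ← hq]; noncomm_ring
    have hpbp0 : 0 ≤ p * b * p := by rw [e1]; exact star_mul_self_nonneg _
    have h1 : τ p ≤ τ (p * b * p) + τ (p * b * p) := by
      rw [← hadd _ _ hpbp0 hpbp0]
      exact hmono p _ hp0 hkey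
    have e2 : (q * p) * star (q * p) = q * p * q := by
      rw [star_mul, hqsa.star_eq, hpsa.star_eq]
      have e : q * p * (p * q) = q * (p * p) * q := by noncomm_ring
      rw [e, hpp]
    have e3 : q * p * q = star (p * q) * (p * q) := by
      rw [star_mul, hqsa.star_eq, hpsa.star_eq]
      have e : q * p * (p * q) = q * (p * p) * q := by noncomm_ring
      rw [e, hpp]
    have hqpq0 : 0 ≤ q * p * q := by rw [e3]; exact star_mul_self_nonneg _
    have e4 : b - q * p * q = star (q - p * q) * (q - p * q) := by
      have e : star (q - p * q) * (q - p * q)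
          = q * q - q * p * q - q * p * q + q * (p * p) * q := by
        rw [star_sub, star_mul, hqsa.star_eq, hpsa.star_eq]; noncomm_ring
      rw [e, hpp, hq]
      abel
    have hc0 : 0 ≤ b - q * p * q := by rw [e4]; exact star_mul_self_nonneg _
    have h2 : τ (p * b * p) ≤ τ b := by
      have hb'' : τ b = τ (q * p * q) + τ (b - q * p * q) := by
        rw [← hadd _ _ hqpq0 hc0]
        congr 1
        abel
      calc τ (p * b * p) = τ (q * p * q) := by rw [e1, htrace (q * p), e2]
      _ ≤ τ b := by rw [hb'']; exact le_self_add
    have hfin' : τ b + τ b ≠ ∞ := ENNReal.add_ne_top.mpr ⟨hbτ, hbτ⟩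
    exact ne_top_of_le_ne_top hfin' (h1.trans (add_le_add h2 h2))
  -- finiteness of the sets `vΛ^{≤ n}`
  have hfin : ∀ (v : Λ.M) (n : Fin k → ℕ), Λ.IsVertex v → (Λ.leSet v n).Finite := by
    intro v n hv
    have h1 : ({m : Fin k → ℕ | m ≤ n}).Finite := by
      apply Set.Finite.subset (Set.Finite.pi (fun i => Set.finite_Iic (n i)))
      intro m hm
      simp only [Set.mem_pi, Set.mem_univ, Set.mem_Iic, forall_true_left]
      intro i
      exact hm i
    apply Set.Finite.subset (h1.biUnion (fun m _ => hrf v m hv))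
    intro y hy
    exact Set.mem_biUnion hy.2.1 ⟨hy.1, rfl⟩
  refine ⟨fun v => hτfin v.1 v.2, ?_⟩
  intro v n
  have hF := hfin v.1 n v.2
  have hCK4 := hs5 v.1 n v.2
  rw [← hF.coe_toFinset, finsum_mem_coe_finset] at hCK4
  have hτv : τ (s v.1) = ∑ y ∈ hF.toFinset, τ (s (Λ.src y)) := by
    rw [hCK4, hsum _ _ (fun i _ => mul_star_self_nonneg (s i))]
    refine Finset.sum_congr rfl fun y _ => ?_
    rw [← htrace (s y), hs4 y]
  show (τ (s v.1)).toNNReal = ∑ᶠ y ∈ Λ.leSet v.1 n, (τ (s (Λ.srcV y).1)).toNNReal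
  rw [← hF.coe_toFinset, finsum_mem_coe_finset, hτv,
    ENNReal.toNNReal_sum (fun y _ => hτfin (Λ.src y) (Λ.isVertex_src y))]
  exact Finset.sum_congr rfl fun y _ => rfl

open KGraph in
/-- If `s` is a Cuntz–Krieger `(Λ,c)`-family in a `C*`-algebra `B`
and `τ` is a semifinite trace on `B`, then `τ(s_v) < ∞` for every vertex `v`, and
`v ↦ τ(s_v)` is a graph trace on `Λ`. -/
theorem graphTrace_of_semifinite_trace {k : ℕ} (Λ : KGraph k)
    (hrf : Λ.RowFinite) (hlc : Λ.LocallyConvex)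
    (c : Λ.M → Λ.M → ℂ) (hc : Λ.IsTCocycle c)
    {B : Type*} [NonUnitalCStarAlgebra B] [NormedSpace ℂ B]
    [PartialOrder B] [StarOrderedRing B]
    (s : Λ.M → B) (hs : Λ.IsCKFamily c s)
    (τ : B → ℝ≥0∞)
    (hadd : ∀ a b : B, 0 ≤ a → 0 ≤ b → τ (a + b) = τ a + τ b)
    (hsmul : ∀ (r : ℝ≥0) (a : B), 0 ≤ a → τ (((r : ℝ) : ℂ) • a) = r * τ a)
    (htrace : ∀ a : B, τ (star a * a) = τ (a * star a))
    (hsemifinite : ∀ a : B, 0 ≤ a → a ∈ closure {b : B | 0 ≤ b ∧ τ b ≠ ∞}) :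
    (∀ v : Λ.Vtx, τ (s v.1) ≠ ∞) ∧
      Λ.IsGraphTrace (fun v : Λ.Vtx => (τ (s v.1)).toNNReal) := by
  obtain ⟨hs1, hs2, hs3, hs4, hs5⟩ := hs
  have htau0 : τ (0 : B) = 0 := by
    have h := hsmul 0 0 le_rfl
    simpa using h
  exact graphTrace_aux Λ hrf s hs1 hs4 hs5 τ htau0 hadd htrace hsemifinite
end
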